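/- arXiv:2304.04504 — 2 statements merged into one kernel-verified Lean document; each statement's English description precedes it below -/
import Mathlib

section
/- Let H be a 2-connected bipartite subgraph of a 2-connected non-bipartite graph G. Then there exists an odd H-ear in G, i.e. a path P in G with both endvertices in V(H), internally vertex-disjoint and edge-disjoint from H, such that H ∪ P is not bipartite. -/
open SimpleGraph

/-! ### Minors and odd-minors -/

/-- `η` is an `H`-expansion in `G`: the branch sets are pairwise disjoint trees in `G`,
and every edge of `H` is realised by an edge of `G` between the corresponding branch sets. -/
def IsExpansion {V W : Type} (G : SimpleGraph V) (H : SimpleGraph W)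
    (η : W → G.Subgraph) : Prop :=
  (∀ w, ((η w).coe).IsTree) ∧
  (Pairwise fun w₁ w₂ => Disjoint (η w₁).verts (η w₂).verts) ∧
  (∀ ⦃w₁ w₂⦄, H.Adj w₁ w₂ → ∃ a ∈ (η w₁).verts, ∃ b ∈ (η w₂).verts, G.Adj a b)

/-- `H` is a minor of `G`. -/
def IsMinor {W V : Type} (H : SimpleGraph W) (G : SimpleGraph V) : Prop :=
  ∃ η : W → G.Subgraph, IsExpansion G H η

/-- `η` together with the witnessing 2-colouring `c` is an odd `H`-expansion in `G`:
`c` is proper on every branch tree, and every edge of `H` is realised by a monochromatic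
edge of `G` between the corresponding branch sets. -/
def IsOddExpansion {V W : Type} (G : SimpleGraph V) (H : SimpleGraph W)
    (η : W → G.Subgraph) (c : V → Bool) : Prop :=
  (∀ w, ((η w).coe).IsTree) ∧
  (Pairwise fun w₁ w₂ => Disjoint (η w₁).verts (η w₂).verts) ∧
  (∀ w, ∀ ⦃a b : V⦄, (η w).Adj a b → c a ≠ c b) ∧
  (∀ ⦃w₁ w₂⦄, H.Adj w₁ w₂ →
      ∃ a ∈ (η w₁).verts, ∃ b ∈ (η w₂).verts, G.Adj a b ∧ c a = c b)

/-- `H` is an odd-minor of `G`. -/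
def IsOddMinor {W V : Type} (H : SimpleGraph W) (G : SimpleGraph V) : Prop :=
  ∃ (η : W → G.Subgraph) (c : V → Bool), IsOddExpansion G H η c

/-! ### Tree-decompositions and (blind) treewidth -/

/-- A tree-decomposition of a graph `G`. -/
structure TreeDecomposition {V : Type} (G : SimpleGraph V) where
  τ : Type
  tree : SimpleGraph τ
  tree_isTree : tree.IsTree
  bag : τ → Set V
  bag_cover : ∀ v : V, ∃ t, v ∈ bag t
  bag_edge : ∀ ⦃u v : V⦄, G.Adj u v → ∃ t, u ∈ bag t ∧ v ∈ bag t
  bag_conn : ∀ v : V, (tree.induce {t | v ∈ bag t}).Connected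

/-- The width of a tree-decomposition: maximum bag size minus one. -/
noncomputable def TreeDecomposition.width {V : Type} {G : SimpleGraph V}
    (D : TreeDecomposition G) : ℕ :=
  sSup {n | ∃ t, n = (D.bag t).ncard} - 1

/-- The treewidth of a graph. -/
noncomputable def treewidth {V : Type} (G : SimpleGraph V) : ℕ :=
  sInf {n | ∃ D : TreeDecomposition G, D.width = n}

/-- The `A`-blind-width of a tree-decomposition: the largest size of a bag `β t` with
`(G, β t) ∉ A`, and `0` if every bag satisfies `A`. -/
noncomputable def TreeDecomposition.blindWidth {V : Type} {G : SimpleGraph V}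
    (D : TreeDecomposition G) (A : Set V → Prop) : ℕ :=
  sSup {n | ∃ t, ¬ A (D.bag t) ∧ n = (D.bag t).ncard}

/-- The `A`-blind-treewidth of a graph. -/
noncomputable def blindTreewidth {V : Type} (G : SimpleGraph V) (A : Set V → Prop) : ℕ :=
  sInf {n | ∃ D : TreeDecomposition G, D.blindWidth A = n}

/-! ### The annotated classes `B` and `P` -/

/-- `X` is globally bipartite in `G`: every odd cycle of `G` contains at most one
vertex of `X`.  This is the annotated class `B`. -/
def GloballyBipartite {V : Type} (G : SimpleGraph V) (X : Set V) : Prop :=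
  ∀ ⦃v : V⦄ (C : G.Walk v v), C.IsCycle → Odd C.length →
    Set.Subsingleton (X ∩ {x | x ∈ C.support})

/-- The torso of `X` in `G`: two vertices of `X` are adjacent iff they are joined by a
path of `G` all of whose internal vertices avoid `X` (equivalently, the torso is obtained
from `G[X]` by making the neighbourhood of each component of `G - X` a clique). -/
def Torso {V : Type} (G : SimpleGraph V) (X : Set V) : SimpleGraph X :=
  SimpleGraph.fromRel fun a b =>
    ∃ p : G.Walk a.1 b.1, p.IsPath ∧ ∀ x ∈ p.support, x ≠ a.1 → x ≠ b.1 → x ∉ X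

/-- Planarity, via Wagner's theorem: a (finite) graph is planar iff it has neither a
`K₅`-minor nor a `K₃,₃`-minor. -/
def IsPlanar {V : Type} (G : SimpleGraph V) : Prop :=
  ¬ IsMinor (⊤ : SimpleGraph (Fin 5)) G ∧
    ¬ IsMinor (completeBipartiteGraph (Fin 3) (Fin 3)) G

/-- `B`-blind-treewidth. -/
noncomputable def blindTwB {V : Type} (G : SimpleGraph V) : ℕ :=
  blindTreewidth G (fun X => GloballyBipartite G X)

/-- `P`-blind-treewidth. -/
noncomputable def blindTwP {V : Type} (G : SimpleGraph V) : ℕ :=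
  blindTreewidth G (fun X => IsPlanar (Torso G X))

/-- `(B ∪ P)`-blind-treewidth. -/
noncomputable def blindTwBP {V : Type} (G : SimpleGraph V) : ℕ :=
  blindTreewidth G (fun X => GloballyBipartite G X ∨ IsPlanar (Torso G X))

/-! ### Grids and their parity variants -/

/-- Grid adjacency (one step in exactly one coordinate) on coordinates. -/
def GridRel (a b : ℕ × ℕ) : Prop :=
  (a.1 = b.1 ∧ a.2 + 1 = b.2) ∨ (a.2 = b.2 ∧ a.1 + 1 = b.1)

/-- The `(n × m)`-grid. -/
def gridGraph (n m : ℕ) : SimpleGraph (Fin n × Fin m) :=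
  SimpleGraph.fromRel fun a b => GridRel (a.1.val, a.2.val) (b.1.val, b.2.val)

/-- The singly parity-breaking grid `S_k`: the `(2k × 2k)`-grid plus the edge
`{(k,k), (k+1,k+1)}` (0-indexed: `{(k-1,k-1), (k,k)}`). -/
def spbGrid (k : ℕ) : SimpleGraph (Fin (2 * k) × Fin (2 * k)) :=
  SimpleGraph.fromRel fun a b =>
    GridRel (a.1.val, a.2.val) (b.1.val, b.2.val) ∨
      (a.1.val = k - 1 ∧ a.2.val = k - 1 ∧ b.1.val = k ∧ b.2.val = k)

/-- The single-crossing grid `U_k`: the `(2k × 2k)`-grid plus the two crossing edges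
`{(k,k),(k+1,k+1)}` and `{(k+1,k),(k,k+1)}`.  This is also the singly parity-crossing
grid `C¹_k`. -/
def scGrid (k : ℕ) : SimpleGraph (Fin (2 * k) × Fin (2 * k)) :=
  SimpleGraph.fromRel fun a b =>
    GridRel (a.1.val, a.2.val) (b.1.val, b.2.val) ∨
      (a.1.val = k - 1 ∧ a.2.val = k - 1 ∧ b.1.val = k ∧ b.2.val = k) ∨
      (a.1.val = k ∧ a.2.val = k - 1 ∧ b.1.val = k - 1 ∧ b.2.val = k)

/-- The singly parity-crossing grid `C¹_k`. -/
abbrev spcGrid1 := scGrid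

/-- The singly parity-crossing grid `C²_k`: the `(2k × 2k)`-grid plus the edge
`{(k,k),(k+1,k+1)}` and the edge `{(k,k+1),(k+1,k)}` subdivided once by the new
vertex `none`. -/
def spcGrid2 (k : ℕ) : SimpleGraph (Option (Fin (2 * k) × Fin (2 * k))) :=
  SimpleGraph.fromRel fun a b =>
    match a, b with
    | some a, some b =>
        GridRel (a.1.val, a.2.val) (b.1.val, b.2.val) ∨
          (a.1.val = k - 1 ∧ a.2.val = k - 1 ∧ b.1.val = k ∧ b.2.val = k)
    | some a, none => (a.1.val = k - 1 ∧ a.2.val = k) ∨ (a.1.val = k ∧ a.2.val = k - 1)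
    | _, _ => False

/-- The singly parity-crossing grid `C³_k`: the `(2k × 2k)`-grid plus both crossing edges,
each subdivided once (by `inr false = y` on `{(k,k),(k+1,k+1)}` and `inr true = x` on
`{(k,k+1),(k+1,k)}`), together with the edge between `(k+1,k+1)` and `x`. -/
def spcGrid3 (k : ℕ) : SimpleGraph ((Fin (2 * k) × Fin (2 * k)) ⊕ Bool) :=
  SimpleGraph.fromRel fun a b =>
    match a, b with
    | Sum.inl a, Sum.inl b => GridRel (a.1.val, a.2.val) (b.1.val, b.2.val)
    | Sum.inl a, Sum.inr x =>
        (x = false ∧ ((a.1.val = k - 1 ∧ a.2.val = k - 1) ∨ (a.1.val = k ∧ a.2.val = k))) ∨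
        (x = true ∧ ((a.1.val = k - 1 ∧ a.2.val = k) ∨ (a.1.val = k ∧ a.2.val = k - 1) ∨
            (a.1.val = k ∧ a.2.val = k)))
    | _, _ => False

/-- `big_S(G)`: the largest `k` such that `G` contains `S_k` as an odd-minor. -/
noncomputable def bigS {V : Type} (G : SimpleGraph V) : ℕ :=
  sSup {k | IsOddMinor (spbGrid k) G}

/-- `big_U(G)`: the largest `k` such that `G` contains `U_k` as a minor. -/
noncomputable def bigU {V : Type} (G : SimpleGraph V) : ℕ :=
  sSup {k | IsMinor (scGrid k) G}

/-- `big_C(G)`: the largest `k` such that `G` contains some `Cⁱ_k` as an odd-minor. -/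
noncomputable def bigC {V : Type} (G : SimpleGraph V) : ℕ :=
  sSup {k | IsOddMinor (spcGrid1 k) G ∨ IsOddMinor (spcGrid2 k) G ∨ IsOddMinor (spcGrid3 k) G}

/-! ### Connectivity, blocks, ears, cuts -/

/-- `G` is 2-connected: at least 3 vertices and `G - v` is connected for every `v`. -/
def TwoConnected {V : Type} (G : SimpleGraph V) : Prop :=
  3 ≤ Nat.card V ∧ ∀ v : V, (G.induce ({v}ᶜ : Set V)).Connected

/-- `v` is a cutvertex of `H`: deleting `v` increases the number of components. -/
def IsCutvertex {α : Type} (H : SimpleGraph α) (v : α) : Prop :=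
  Nat.card H.ConnectedComponent < Nat.card (H.induce ({v}ᶜ : Set α)).ConnectedComponent

/-- `B` is a block of `G`: a maximal connected subgraph of `G` without a cutvertex. -/
def IsBlock {V : Type} (G : SimpleGraph V) (B : G.Subgraph) : Prop :=
  B.coe.Connected ∧ (∀ v : B.verts, ¬ IsCutvertex B.coe v) ∧
    ∀ B' : G.Subgraph, B ≤ B' → B'.coe.Connected →
      (∀ v : B'.verts, ¬ IsCutvertex B'.coe v) → B = B'

/-- `p` is an `H`-ear in `G`: a path with both endvertices in `H`, internally
vertex-disjoint from `H` and edge-disjoint from `H`. -/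
def IsEar {V : Type} {G : SimpleGraph V} (H : G.Subgraph) {a b : V} (p : G.Walk a b) : Prop :=
  p.IsPath ∧ a ∈ H.verts ∧ b ∈ H.verts ∧
    (∀ x ∈ p.support, x ≠ a → x ≠ b → x ∉ H.verts) ∧
    ∀ e ∈ p.edges, e ∉ H.edgeSet

/-- `p` is an odd `H`-ear: `H` is bipartite but `H ∪ p` is not. -/
def IsOddEar {V : Type} {G : SimpleGraph V} (H : G.Subgraph) {a b : V} (p : G.Walk a b) :
    Prop :=
  IsEar H p ∧ H.coe.Colorable 2 ∧ ¬ ((H ⊔ p.toSubgraph).coe.Colorable 2)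

/-- `∂_G(X)`: the set of edges of `G` with exactly one endvertex in `X`. -/
def edgeBoundary {V : Type} (G : SimpleGraph V) (X : Set V) : Set (Sym2 V) :=
  {e | e ∈ G.edgeSet ∧ ∃ a b, e = s(a, b) ∧ a ∈ X ∧ b ∉ X}

/-- `F` is a cut of `G`: `F = ∂_G(X)` for some non-empty proper `X ⊆ V(G)`. -/
def IsCut {V : Type} (G : SimpleGraph V) (F : Set (Sym2 V)) : Prop :=
  ∃ X : Set V, X.Nonempty ∧ X ≠ Set.univ ∧ F = edgeBoundary G X

/-- `F` is a cut of the subgraph `B` (viewed as a graph in its own right). -/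
def SubgraphIsCut {V : Type} {G : SimpleGraph V} (B : G.Subgraph) (F : Set (Sym2 V)) : Prop :=
  ∃ X : Set V, X ⊆ B.verts ∧ X.Nonempty ∧ X ≠ B.verts ∧
    F = {e | e ∈ B.edgeSet ∧ ∃ a b, e = s(a, b) ∧ a ∈ X ∧ b ∈ B.verts ∧ b ∉ X}

/-! ### Walls -/

/-- Vertex set of the elementary `k`-wall, as a subset of the 1-indexed `(k × 2k)`-grid:
the two degree-one vertices of the brick pattern are removed. -/
def elemWallVerts (k : ℕ) : Set (ℕ × ℕ) :=
  {p | 1 ≤ p.1 ∧ p.1 ≤ k ∧ 1 ≤ p.2 ∧ p.2 ≤ 2 * k ∧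
      ¬(p.1 = 1 ∧ p.2 = 1) ∧ ¬(p.1 = k ∧ p.2 = (if k % 2 = 0 then 1 else 2 * k))}

/-- Adjacency of the elementary wall: all horizontal grid edges, and the vertical grid
edges `{(i,j),(i+1,j)}` with `i + j` odd. -/
def elemWallRel (a b : ℕ × ℕ) : Prop :=
  (a.1 = b.1 ∧ a.2 + 1 = b.2) ∨ (a.2 = b.2 ∧ a.1 + 1 = b.1 ∧ (a.1 + a.2) % 2 = 1)

/-- The elementary `k`-wall. -/
def elemWall (k : ℕ) : SimpleGraph (elemWallVerts k) :=
  SimpleGraph.fromRel fun a b => elemWallRel a.1 b.1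

/-- The four corners of the elementary `k`-wall. -/
def elemWallCorners (k : ℕ) : Set (ℕ × ℕ) :=
  {(1, 2), (1, 2 * k), (k, if k % 2 = 0 then 2 else 1),
    (k, if k % 2 = 0 then 2 * k else 2 * k - 1)}

/-- `{a, b}` is an edge of the perimeter of the elementary `k`-wall: both ends in the
first row, the last row, the first (wall-)column, or the last (wall-)column. -/
def elemPerimEdge (k : ℕ) (a b : ℕ × ℕ) : Prop :=
  (a.1 = 1 ∧ b.1 = 1) ∨ (a.1 = k ∧ b.1 = k) ∨
    (a.2 ≤ 2 ∧ b.2 ≤ 2) ∨ (2 * k - 1 ≤ a.2 ∧ 2 * k - 1 ≤ b.2)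

/-- A `k`-wall in `G`, given by subdivision data for the elementary `k`-wall:
injective branch-vertex map `φ` and internally disjoint paths for the wall edges. -/
structure WallIn {V : Type} (G : SimpleGraph V) (k : ℕ) where
  φ : elemWallVerts k → V
  inj : Function.Injective φ
  path : ∀ ⦃v w : elemWallVerts k⦄, (elemWall k).Adj v w → G.Walk (φ v) (φ w)
  isPath : ∀ ⦃v w⦄ (h : (elemWall k).Adj v w), (path h).IsPath
  path_symm : ∀ ⦃v w⦄ (h : (elemWall k).Adj v w), path h.symm = (path h).reverse
  internal : ∀ ⦃v w⦄ (h : (elemWall k).Adj v w), ∀ x ∈ (path h).support,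
      x ∈ Set.range φ → x = φ v ∨ x = φ w
  disj : ∀ ⦃v w v' w'⦄ (h : (elemWall k).Adj v w) (h' : (elemWall k).Adj v' w'),
      s(v, w) ≠ s(v', w') → ∀ x ∈ (path h).support, x ∈ (path h').support → x ∈ Set.range φ

/-- The wall, as a subgraph of `G` (the union of all its paths). -/
def WallIn.subgraph {V : Type} {G : SimpleGraph V} {k : ℕ} (S : WallIn G k) : G.Subgraph :=
  ⨆ (v : elemWallVerts k) (w : elemWallVerts k) (h : (elemWall k).Adj v w),
    (S.path h).toSubgraph

/-- The vertices on the perimeter of the wall. -/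
def WallIn.perimeter {V : Type} {G : SimpleGraph V} {k : ℕ} (S : WallIn G k) : Set V :=
  {x | ∃ (v w : elemWallVerts k) (h : (elemWall k).Adj v w),
      elemPerimEdge k v.1 w.1 ∧ x ∈ (S.path h).support}

/-- The corners of the wall. -/
def WallIn.corners {V : Type} {G : SimpleGraph V} {k : ℕ} (S : WallIn G k) : Set V :=
  {x | ∃ v : elemWallVerts k, v.1 ∈ elemWallCorners k ∧ x = S.φ v}

/-- The wall is clean: it has a proper 2-colouring in which all branch vertices
(vertices of degree 3 in the wall) and all corners lie in the same colour class. -/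
def WallIn.Clean {V : Type} {G : SimpleGraph V} {k : ℕ} (S : WallIn G k) : Prop :=
  ∃ (c : V → Bool) (col : Bool),
    (∀ ⦃a b : V⦄, S.subgraph.Adj a b → c a ≠ c b) ∧
    (∀ x : V, (3 ≤ (S.subgraph.neighborSet x).ncard ∨ x ∈ S.corners) → c x = col)

/-- `G` contains a clean cross-wall of order `k` as a subgraph: a clean `k`-wall `W`
with corners `s₁, s₂, t₁, t₂` (in cyclic order along the perimeter) together with two
vertex-disjoint `W`-ears `P₁` from `s₁` to `t₁` and `P₂` from `s₂` to `t₂`. -/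
def HasCleanCrossWall {V : Type} (G : SimpleGraph V) (k : ℕ) : Prop :=
  ∃ S : WallIn G k, S.Clean ∧
    ∃ (s₁ s₂ t₁ t₂ : V) (p₁ : G.Walk s₁ t₁) (p₂ : G.Walk s₂ t₂),
      (∃ v : elemWallVerts k, S.φ v = s₁ ∧ v.1 = (1, 2)) ∧
      (∃ v : elemWallVerts k, S.φ v = s₂ ∧ v.1 = (1, 2 * k)) ∧
      (∃ v : elemWallVerts k, S.φ v = t₁ ∧
        v.1 = (k, if k % 2 = 0 then 2 * k else 2 * k - 1)) ∧
      (∃ v : elemWallVerts k, S.φ v = t₂ ∧ v.1 = (k, if k % 2 = 0 then 2 else 1)) ∧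
      IsEar S.subgraph p₁ ∧ IsEar S.subgraph p₂ ∧
      ∀ x ∈ p₁.support, x ∉ p₂.support

section OddEarAux

set_option linter.unusedSectionVars false

variable {V : Type} [DecidableEq V] {G : SimpleGraph V}



/-- parity along a walk with properly 2-colored edges -/
lemma OE_parity_along (d : V → Bool) : ∀ {a b : V} (w : G.Walk a b),
    (∀ x y : V, s(x,y) ∈ w.edges → d x ≠ d y) → ((d a = d b) ↔ Even w.length) := by
  intro a b w
  induction w with
  | nil => simp
  | @cons a y b h p ih =>
    intro hed
    have h1 : d a ≠ d y := hed a y (by simp)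
    have h2 : (d y = d b) ↔ Even p.length := ih (fun x y hxy => hed x y (by simp [hxy]))
    simp only [Walk.length_cons, Nat.even_add_one]
    cases hy : d a <;> cases hz : d y <;> cases hb : d b <;> simp_all

lemma OE_edge_of_path : ∀ {a b : V} (q : G.Walk a b), q.IsPath → s(a,b) ∈ q.edges → q.length = 1 := by
  intro a b q
  induction q with
  | nil => simp
  | @cons a y b h p ih =>
    intro hq he
    rw [Walk.edges_cons, List.mem_cons] at he
    rcases he with he | he
    · rw [Sym2.eq_iff] at he
      rcases he with ⟨-, rfl⟩ | ⟨h1, h2⟩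
      · have : p = Walk.nil := Walk.isPath_iff_eq_nil.mp hq.of_cons
        subst this; simp
      · exact absurd h1 h.ne
    · exact absurd (Walk.fst_mem_support_of_mem_edges p he) ((Walk.cons_isPath_iff h p).mp hq).2


lemma OE_isPath_append {a b d : V} {p : G.Walk a b} {q : G.Walk b d}
    (hp : p.IsPath) (hq : q.IsPath)
    (hint : ∀ y ∈ p.support, y ∈ q.support → y = b) : (p.append q).IsPath := by
  have hqn := (Walk.isPath_def _).mp hq
  have hbt : b ∉ q.support.tail := by
    intro hb
    have := hqn
    rw [q.support_eq_cons] at this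
    exact ((List.nodup_cons.mp this).1) hb
  rw [Walk.isPath_def, Walk.support_append]
  refine List.Nodup.append ((Walk.isPath_def _).mp hp) hqn.tail ?_
  intro y hy hy2
  have := hint y hy (List.mem_of_mem_tail hy2)
  subst this
  exact hbt hy2

lemma OE_end_mem_tail {v : V} (c : G.Walk v v) (h : c ≠ Walk.nil) : v ∈ c.support.tail := by
  cases c with
  | nil => exact absurd rfl h
  | cons h p => simpa using p.end_mem_support

lemma OE_mem_support_tail_iff {v : V} (c : G.Walk v v) (h : c ≠ Walk.nil) (z : V) :
    z ∈ c.support ↔ z ∈ c.support.tail := by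
  constructor
  · intro hz
    rw [c.support_eq_cons, List.mem_cons] at hz
    rcases hz with rfl | hz
    · exact OE_end_mem_tail c h
    · exact hz
  · intro hz; exact List.mem_of_mem_tail hz

lemma OE_length_rotate {u v : V} (c : G.Walk v v) (h : u ∈ c.support) :
    (c.rotate u h).length = c.length := by
  unfold Walk.rotate
  rw [Walk.length_append, Nat.add_comm, ← Walk.length_append, Walk.take_spec]

lemma OE_rotate_ne_nil {u v : V} (c : G.Walk v v) (hc : c ≠ Walk.nil) (h : u ∈ c.support) :
    c.rotate u h ≠ Walk.nil := by
  intro hn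
  have h1 := OE_length_rotate c h
  rw [hn] at h1
  simp at h1
  exact hc (Walk.nil_iff_eq_nil.mp (Walk.length_eq_zero_iff.mp h1.symm))

lemma OE_support_rotate_mem {u v : V} (c : G.Walk v v) (hc : c ≠ Walk.nil) (h : u ∈ c.support)
    (z : V) : z ∈ (c.rotate u h).support ↔ z ∈ c.support := by
  rw [OE_mem_support_tail_iff _ (OE_rotate_ne_nil c hc h), OE_mem_support_tail_iff c hc]
  exact (c.support_rotate u h).mem_iff


/-- a cycle out of two internally disjoint paths -/
lemma OE_cycle_of_two_paths {x y : V} {p : G.Walk x y} {q : G.Walk y x}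
    (hp : p.IsPath) (hq : q.IsPath) (hxy : x ≠ y)
    (hint : ∀ z ∈ p.support, z ∈ q.support → z = x ∨ z = y)
    (hlen : 3 ≤ p.length + q.length) : (p.append q).IsCycle := by
  have hedis : ∀ e ∈ p.edges, e ∉ q.edges := by
    intro e hep heq
    have he' : e ∈ G.edgeSet := p.edges_subset_edgeSet hep
    induction e with
    | h c d =>
      have hc1 : c ∈ p.support := Walk.fst_mem_support_of_mem_edges p hep
      have hc2 : c ∈ q.support := Walk.fst_mem_support_of_mem_edges q heq
      have hd1 : d ∈ p.support := Walk.snd_mem_support_of_mem_edges p hep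
      have hd2 : d ∈ q.support := Walk.snd_mem_support_of_mem_edges q heq
      have hcd : c ≠ d := (G.ne_of_adj he')
      rcases hint c hc1 hc2 with rfl | rfl <;> rcases hint d hd1 hd2 with rfl | rfl
      · exact hcd rfl
      · -- e = s(x,y)
        have l1 : p.length = 1 := OE_edge_of_path p hp hep
        have l2 : q.length = 1 := OE_edge_of_path q hq (by rwa [Sym2.eq_swap] at heq)
        omega
      · have l1 : p.length = 1 := OE_edge_of_path p hp (by rwa [Sym2.eq_swap] at hep)
        have l2 : q.length = 1 := OE_edge_of_path q hq heq
        omega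
      · exact hcd rfl
  refine ⟨⟨⟨?_⟩, ?_⟩, ?_⟩
  · rw [Walk.edges_append]
    exact List.Nodup.append hp.isTrail.edges_nodup hq.isTrail.edges_nodup hedis
  · intro hn
    have : (p.append q).length = 0 := by rw [hn]; simp
    rw [Walk.length_append] at this
    omega
  · -- support tail nodup
    rw [Walk.tail_support_append]
    have hpt : p.support.tail.Nodup := ((Walk.isPath_def _).mp hp).tail
    have hqt : q.support.tail.Nodup := ((Walk.isPath_def _).mp hq).tail
    refine List.Nodup.append hpt hqt ?_
    intro z hz1 hz2
    rcases hint z (List.mem_of_mem_tail hz1) (List.mem_of_mem_tail hz2) with rfl | rfl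
    · have := (Walk.isPath_def _).mp hp
      rw [p.support_eq_cons] at this
      exact (List.nodup_cons.mp this).1 hz1
    · have := (Walk.isPath_def _).mp hq
      rw [q.support_eq_cons] at this
      exact (List.nodup_cons.mp this).1 hz2


lemma OE_arcs {x r : V} {C : G.Walk x x} (hC : C.IsCycle) (hr : r ∈ C.support) (hrx : r ≠ x) :
    ∃ (A₁ A₂ : G.Walk x r), A₁.IsPath ∧ A₂.IsPath ∧ A₁.length + A₂.length = C.length ∧
      (∀ z ∈ A₁.support, z ∈ C.support) ∧ (∀ z ∈ A₂.support, z ∈ C.support) ∧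
      (∀ z ∈ A₁.support, z ∈ A₂.support → z = x ∨ z = r) := by
  set A₁ := C.takeUntil r hr with hA₁
  set D := C.dropUntil r hr with hD
  have hspec : A₁.append D = C := C.take_spec hr
  have hsup : C.support = A₁.support ++ D.support.tail := by
    rw [← hspec, Walk.support_append]
  have htail : C.support.tail = A₁.support.tail ++ D.support.tail := by
    have h1 := hsup
    rw [C.support_eq_cons, A₁.support_eq_cons] at h1
    simpa using congrArg List.tail h1
  have hnd := hC.support_nodup
  rw [htail] at hnd
  have h1 : A₁.support.tail.Nodup := hnd.of_append_left
  have h2 : D.support.tail.Nodup := hnd.of_append_right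
  have hdisj : ∀ z ∈ A₁.support.tail, z ∉ D.support.tail :=
    fun z hz1 hz2 => (List.disjoint_of_nodup_append hnd) hz1 hz2
  have hxr : x ≠ r := fun h => hrx h.symm
  have hxD : x ∈ D.support.tail := Walk.end_mem_tail_support_of_ne hrx D
  have hrA : r ∈ A₁.support.tail := Walk.end_mem_tail_support_of_ne hxr A₁
  have hA₁path : A₁.IsPath := by
    rw [Walk.isPath_def, A₁.support_eq_cons]
    exact List.nodup_cons.mpr ⟨fun hx => hdisj x hx hxD, h1⟩
  have hDpath : D.IsPath := by
    rw [Walk.isPath_def, D.support_eq_cons]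
    exact List.nodup_cons.mpr ⟨fun hx => hdisj r hrA hx, h2⟩
  refine ⟨A₁, D.reverse, hA₁path, hDpath.reverse, ?_, ?_, ?_, ?_⟩
  · have := congrArg Walk.length hspec
    rw [Walk.length_append] at this
    rw [Walk.length_reverse]
    exact this
  · exact fun z hz => C.support_takeUntil_subset hr hz
  · intro z hz
    rw [Walk.support_reverse, List.mem_reverse] at hz
    exact C.support_dropUntil_subset hr hz
  · intro z hz1 hz2
    rw [Walk.support_reverse, List.mem_reverse] at hz2
    rw [A₁.support_eq_cons, List.mem_cons] at hz1
    rcases hz1 with rfl | hz1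
    · exact Or.inl rfl
    · rw [D.support_eq_cons, List.mem_cons] at hz2
      rcases hz2 with rfl | hz2
      · exact Or.inr rfl
      · exact absurd hz2 (hdisj z hz1)


/-- split a walk at the first vertex lying in `S` -/
lemma OE_firstSplit (S : Set V) : ∀ {a b : V} (w : G.Walk a b), b ∈ S →
    ∃ (s : V) (w₁ : G.Walk a s) (w₂ : G.Walk s b), s ∈ S ∧
      w₁.length + w₂.length = w.length ∧
      (∀ y ∈ w₁.support, y ∈ S → y = s) ∧
      (∀ y ∈ w₁.support, y ∈ w.support) ∧ (∀ y ∈ w₂.support, y ∈ w.support) := by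
  intro a b w
  induction w with
  | @nil a =>
    intro hb
    exact ⟨a, Walk.nil, Walk.nil, hb, by simp, by simp, by simp, by simp⟩
  | @cons a y b h p ih =>
    intro hb
    by_cases ha : a ∈ S
    · exact ⟨a, Walk.nil, Walk.cons h p, ha, by simp, by simp, by simp, by simp⟩
    · obtain ⟨s, w₁, w₂, hs, hlen, hfirst, hsub1, hsub2⟩ := ih hb
      refine ⟨s, Walk.cons h w₁, w₂, hs, by simp [← hlen]; omega, ?_, ?_, ?_⟩
      · intro z hz hzS
        rw [Walk.support_cons, List.mem_cons] at hz
        rcases hz with rfl | hz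
        · exact absurd hzS ha
        · exact hfirst z hz hzS
      · intro z hz
        rw [Walk.support_cons, List.mem_cons] at hz
        rw [Walk.support_cons, List.mem_cons]
        rcases hz with rfl | hz
        · exact Or.inl rfl
        · exact Or.inr (hsub1 z hz)
      · intro z hz
        rw [Walk.support_cons, List.mem_cons]
        exact Or.inr (hsub2 z hz)

/-- either all `H`-vertices on the walk are endpoint values, or the walk splits at an
internal `H`-vertex -/
lemma OE_splitH (T : Set V) : ∀ {u v : V} (w : G.Walk u v),
    (∀ y ∈ w.support, y ∈ T → y = u ∨ y = v) ∨
    (∃ (m : V) (w₁ : G.Walk u m) (w₂ : G.Walk m v), m ∈ T ∧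
      w₁.length + w₂.length = w.length ∧ 1 ≤ w₁.length ∧ 1 ≤ w₂.length) := by
  intro u v w
  induction w with
  | nil => exact Or.inl (by simp)
  | @cons a y b h p ih =>
    cases p with
    | nil =>
      refine Or.inl ?_
      intro z hz _
      rw [Walk.support_cons, List.mem_cons] at hz
      rcases hz with rfl | hz
      · exact Or.inl rfl
      · simp at hz; exact Or.inr hz
    | @cons y c b h' p' =>
      by_cases hy : y ∈ T
      · exact Or.inr ⟨y, Walk.cons h Walk.nil, Walk.cons h' p', hy, by simp; omega, by simp, by simp⟩
      · rcases ih with hl | ⟨m, w₁, w₂, hm, hlen, h1, h2⟩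
        · refine Or.inl ?_
          intro z hz hzT
          rw [Walk.support_cons, List.mem_cons] at hz
          rcases hz with rfl | hz
          · exact Or.inl rfl
          · rcases hl z hz hzT with rfl | rfl
            · exact absurd hzT hy
            · exact Or.inr rfl
        · exact Or.inr ⟨m, Walk.cons h w₁, w₂, hm, by simp [← hlen]; omega, by simp, h2⟩

/-- split a non-simple walk into a prefix, a nonempty loop, and a suffix -/
lemma OE_splitDup : ∀ {a b : V} (w : G.Walk a b), ¬ w.support.Nodup →
    ∃ (z : V) (w₁ : G.Walk a z) (L : G.Walk z z) (w₂ : G.Walk z b),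
      w₁.length + (L.length + w₂.length) = w.length ∧ 1 ≤ L.length ∧
      (∀ y ∈ w₁.support, y ∈ w.support) ∧ (∀ y ∈ L.support, y ∈ w.support) ∧
      (∀ y ∈ w₂.support, y ∈ w.support) := by
  intro a b w
  induction w with
  | nil => intro h; simp at h
  | @cons a y b h p ih =>
    intro hnd
    by_cases ha : a ∈ p.support
    · refine ⟨a, Walk.nil, Walk.cons h (p.takeUntil a ha), p.dropUntil a ha, ?_, by simp, ?_, ?_, ?_⟩
      · have := congrArg Walk.length (p.take_spec ha)
        rw [Walk.length_append] at this
        simp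
        omega
      · simp
      · intro z hz
        rw [Walk.support_cons, List.mem_cons] at hz ⊢
        rcases hz with rfl | hz
        · exact Or.inl rfl
        · exact Or.inr (p.support_takeUntil_subset ha hz)
      · intro z hz
        rw [Walk.support_cons, List.mem_cons]
        exact Or.inr (p.support_dropUntil_subset ha hz)
    · have hp : ¬ p.support.Nodup := by
        rw [Walk.support_cons] at hnd
        intro hh
        exact hnd (List.nodup_cons.mpr ⟨ha, hh⟩)
      obtain ⟨z, w₁, L, w₂, hlen, hL, hs1, hs2, hs3⟩ := ih hp
      refine ⟨z, Walk.cons h w₁, L, w₂, by simp [← hlen]; omega, hL, ?_, ?_, ?_⟩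
      · intro t ht
        rw [Walk.support_cons, List.mem_cons] at ht ⊢
        rcases ht with rfl | ht
        · exact Or.inl rfl
        · exact Or.inr (hs1 t ht)
      · intro t ht
        rw [Walk.support_cons, List.mem_cons]
        exact Or.inr (hs2 t ht)
      · intro t ht
        rw [Walk.support_cons, List.mem_cons]
        exact Or.inr (hs3 t ht)


/-- every odd closed walk contains an odd cycle -/
lemma OE_extract : ∀ (n : ℕ) {x : V} (w : G.Walk x x), w.length = n → Odd w.length →
    ∃ (y : V) (C : G.Walk y y), C.IsCycle ∧ Odd C.length ∧ ∀ z ∈ C.support, z ∈ w.support := by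
  intro n
  induction n using Nat.strong_induction_on with
  | _ n IH =>
    intro x w hn hodd
    cases w with
    | nil => simp at hodd
    | @cons x y x' h p =>
      by_cases hnd : p.support.Nodup
      · have hp : p.IsPath := (Walk.isPath_def p).mpr hnd
        have hne : s(x,y) ∉ p.edges := by
          intro he
          have : p.length = 1 := OE_edge_of_path p hp (by rwa [Sym2.eq_swap] at he)
          rw [Walk.length_cons, this] at hodd
          simp [Nat.odd_iff] at hodd
        refine ⟨x, Walk.cons h p, ?_, hodd, fun z hz => hz⟩
        exact (Walk.cons_isCycle_iff p h).mpr ⟨hp, hne⟩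
      · obtain ⟨z, w₁, L, w₂, hlen, hL1, hs1, hs2, hs3⟩ := OE_splitDup p hnd
        rw [Walk.length_cons] at hn
        by_cases hLodd : Odd L.length
        · obtain ⟨y', C, hC, hCodd, hCsub⟩ := IH L.length (by omega) L rfl hLodd
          exact ⟨y', C, hC, hCodd, fun t ht => by
            rw [Walk.support_cons, List.mem_cons]; exact Or.inr (hs2 t (hCsub t ht))⟩
        · have hLev : Even L.length := Nat.not_odd_iff_even.mp hLodd
          set w' : G.Walk x x := Walk.cons h (w₁.append w₂) with hw'
          have hlen' : w'.length = 1 + (w₁.length + w₂.length) := by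
            rw [hw', Walk.length_cons, Walk.length_append]; omega
          have hltn : w'.length < n := by
            obtain ⟨k, hk⟩ := hLev
            omega
          have hodd' : Odd w'.length := by
            rw [Walk.length_cons] at hodd
            obtain ⟨k, hk⟩ := hLev
            rw [Nat.odd_iff] at hodd ⊢
            omega
          obtain ⟨y', C, hC, hCodd, hCsub⟩ := IH w'.length hltn w' rfl hodd'
          refine ⟨y', C, hC, hCodd, fun t ht => ?_⟩
          have := hCsub t ht
          rw [hw', Walk.support_cons, List.mem_cons] at this
          rw [Walk.support_cons, List.mem_cons]
          rcases this with rfl | hts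
          · exact Or.inl rfl
          · rw [Walk.mem_support_append_iff] at hts
            rcases hts with hts | hts
            · exact Or.inr (hs1 t hts)
            · exact Or.inr (hs3 t hts)


lemma OE_coe_walk {H' : G.Subgraph} : ∀ {s t : H'.verts} (q : H'.coe.Walk s t),
    ∃ w : G.Walk s.val t.val, ∀ e ∈ w.edges, e ∈ H'.edgeSet := by
  intro s t q
  induction q with
  | nil => exact ⟨Walk.nil, by simp⟩
  | @cons a b t h q ih =>
    obtain ⟨w, hw⟩ := ih
    have hadj : H'.Adj a.val b.val := h
    refine ⟨Walk.cons (H'.adj_sub hadj) w, ?_⟩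
    intro e he
    rw [Walk.edges_cons, List.mem_cons] at he
    rcases he with rfl | he
    · exact Subgraph.mem_edgeSet.mpr hadj
    · exact hw e he

lemma OE_bool_coloring (K : G.Subgraph) (h : K.coe.Colorable 2) :
    ∃ d : V → Bool, ∀ x y : V, K.Adj x y → d x ≠ d y := by
  obtain ⟨C⟩ := h
  classical
  refine ⟨fun v => if hv : v ∈ K.verts then decide (C ⟨v, hv⟩ = 1) else false, ?_⟩
  intro x y hadj
  have hx : x ∈ K.verts := hadj.fst_mem
  have hy : y ∈ K.verts := hadj.snd_mem
  have hcadj : K.coe.Adj ⟨x, hx⟩ ⟨y, hy⟩ := hadj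
  have hne := C.valid hcadj
  simp only [dif_pos hx, dif_pos hy]
  intro heq
  apply hne
  have h1 : (decide (C ⟨x, hx⟩ = 1)) = (decide (C ⟨y, hy⟩ = 1)) := heq
  rcases (by omega : (C ⟨x, hx⟩ : Fin 2) = 0 ∨ (C ⟨x, hx⟩ : Fin 2) = 1) with h0 | h0 <;>
    rcases (by omega : (C ⟨y, hy⟩ : Fin 2) = 0 ∨ (C ⟨y, hy⟩ : Fin 2) = 1) with h2 | h2 <;>
      simp_all

/-- uniqueness of the 2-colouring relation on a connected subgraph -/
lemma OE_parity_unique {H' : G.Subgraph} (hconn : H'.coe.Connected)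
    (c d : V → Bool) (hc : ∀ x y : V, H'.Adj x y → c x ≠ c y)
    (hd : ∀ x y : V, H'.Adj x y → d x ≠ d y)
    {a b : V} (ha : a ∈ H'.verts) (hb : b ∈ H'.verts) :
    (c a = c b) ↔ (d a = d b) := by
  obtain ⟨q⟩ := hconn.preconnected ⟨a, ha⟩ ⟨b, hb⟩
  obtain ⟨w, hw⟩ := OE_coe_walk q
  have h1 := OE_parity_along c w (fun x y hxy => hc x y (Subgraph.mem_edgeSet.mp (hw _ hxy)))
  have h2 := OE_parity_along d w (fun x y hxy => hd x y (Subgraph.mem_edgeSet.mp (hw _ hxy)))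
  rw [h1, h2]


lemma OE_third {α : Type} (h3 : 3 ≤ Nat.card α) (x y : α) : ∃ z : α, z ≠ x ∧ z ≠ y := by
  by_contra hc
  push_neg at hc
  have huniv : (Set.univ : Set α) ⊆ {x, y} := by
    intro z _
    rcases Classical.em (z = x) with rfl | hz
    · exact Set.mem_insert _ _
    · rcases hc z hz with rfl; exact Set.mem_insert_of_mem _ rfl
  have hfin : Finite α := by
    have : 0 < Nat.card α := by omega
    exact (Nat.card_pos_iff.mp this).2
  have h1 : Nat.card α ≤ 2 := by
    rw [← Set.ncard_univ]
    calc (Set.univ : Set α).ncard ≤ ({x, y} : Set α).ncard :=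
          Set.ncard_le_ncard huniv (Set.toFinite _)
      _ ≤ 2 := by
          refine le_trans (Set.ncard_insert_le x {y}) ?_
          simp
  omega

/-- the hom from an induced subgraph back to the big graph -/
def OE_inclHom (s : Set V) : G.induce s →g G where
  toFun := Subtype.val
  map_rel' := fun h => h

lemma OE_twoConnected_connected {α : Type} {K : SimpleGraph α} (h : TwoConnected K) :
    K.Connected := by
  obtain ⟨h3, hdel⟩ := h
  have hne : Nonempty α := by
    have : 0 < Nat.card α := by omega
    exact (Nat.card_pos_iff.mp this).1
  constructor
  intro x y
  rcases Classical.em (x = y) with rfl | hxy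
  · rfl
  obtain ⟨z, hzx, hzy⟩ := OE_third h3 x y
  have hconn := hdel z
  have hr := hconn.preconnected ⟨x, by simp; exact fun h => hzx h.symm⟩
    ⟨y, by simp; exact fun h => hzy h.symm⟩
  have := hr.map (OE_inclHom ({z}ᶜ : Set α))
  exact this

lemma OE_avoid_walk (hG2 : TwoConnected G) (x u v : V) (hu : u ≠ x) (hv : v ≠ x) :
    ∃ w : G.Walk u v, x ∉ w.support := by
  have hconn := hG2.2 x
  have hr := hconn.preconnected ⟨u, by simp [hu]⟩ ⟨v, by simp [hv]⟩
  obtain ⟨w'⟩ := hr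
  refine ⟨w'.map (OE_inclHom _), ?_⟩
  intro hx0
  have hx : x ∈ (w'.map (OE_inclHom ({x}ᶜ : Set V))).support := hx0
  rw [Walk.support_map] at hx
  obtain ⟨⟨z, hz⟩, -, h2⟩ := List.mem_map.mp hx
  simp only [OE_inclHom] at h2
  rw [Set.mem_compl_iff, Set.mem_singleton_iff] at hz
  exact hz (by exact h2 ▸ rfl)

end OddEarAux

section OddEarAux2
variable {V' : Type} [DecidableEq V'] {G' : SimpleGraph V'}


lemma OE_bad_ear {H' : G'.Subgraph} (hHb : H'.coe.Colorable 2) (hconn : H'.coe.Connected)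
    (c : V' → Bool) (hc : ∀ x y : V', H'.Adj x y → c x ≠ c y)
    {a b : V'} {p : G'.Walk a b} (hear : IsEar H' p) (hbad : (c a = c b) ↔ Odd p.length) :
    IsOddEar H' p := by
  refine ⟨hear, hHb, ?_⟩
  intro hcol
  obtain ⟨d, hd⟩ := OE_bool_coloring _ hcol
  have hdH : ∀ x y : V', H'.Adj x y → d x ≠ d y :=
    fun x y h => hd x y (Subgraph.sup_adj.mpr (Or.inl h))
  have h1 : (c a = c b) ↔ (d a = d b) :=
    OE_parity_unique hconn c d hc hdH hear.2.1 hear.2.2.1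
  have h2 : (d a = d b) ↔ Even p.length := by
    refine OE_parity_along d p ?_
    intro x y hxy
    refine hd x y (Subgraph.sup_adj.mpr (Or.inr ?_))
    exact Subgraph.mem_edgeSet.mp ((Walk.mem_edges_toSubgraph p).mpr hxy)
  rw [h1, h2] at hbad
  rcases Nat.even_or_odd p.length with he | ho
  · exact (Nat.not_odd_iff_even.mpr he) (hbad.mp he)
  · exact (Nat.not_even_iff_odd.mpr ho) (hbad.mpr ho)
lemma OE_lolli {H' : G'.Subgraph} (hG2 : TwoConnected G')
    (hHb : H'.coe.Colorable 2) (hHconn : H'.coe.Connected) (hH3 : 3 ≤ Nat.card H'.verts)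
    (c : V' → Bool) (hc : ∀ x y : V', H'.Adj x y → c x ≠ c y) :
    ∀ (n : ℕ) {x u : V'} (T : G'.Walk x u) (C : G'.Walk x x), T.length = n →
      C.IsCycle → Odd C.length → T.IsPath → u ∈ H'.verts →
      (∀ z ∈ C.support, z ∈ H'.verts → z = u) →
      (∀ z ∈ T.support, z ∈ H'.verts → z = u) →
      (∀ z ∈ T.support, z ∈ C.support → z = x) →
      ∃ (a b : V') (p : G'.Walk a b), IsOddEar H' p := by
  intro n
  induction n using Nat.strong_induction_on with
  | _ n IH =>
    intro x u T C hTn hC hCodd hT hu hCH hTH hTC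
    -- second vertex of the cycle
    have hClen := hC.three_le_length
    have hadj01 : G'.Adj x (C.getVert 1) := by
      have := C.adj_getVert_succ (by omega : 0 < C.length)
      simpa using this
    set c₀ := C.getVert 1 with hc₀
    have hc₀mem : c₀ ∈ C.support :=
      (Walk.mem_support_iff_exists_getVert).mpr ⟨1, rfl, by omega⟩
    have hc₀x : c₀ ≠ x := fun h => hadj01.ne h.symm
    -- a vertex of H distinct from x
    have hh₀ : ∃ h₀, h₀ ∈ H'.verts ∧ h₀ ≠ x := by
      by_cases hux : u = x
      · obtain ⟨z, hz1, -⟩ := OE_third hH3 ⟨u, hu⟩ ⟨u, hu⟩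
        exact ⟨z.val, z.property, fun h => hz1 (Subtype.ext (h.trans hux.symm))⟩
      · exact ⟨u, hu, hux⟩
    obtain ⟨h₀, hh₀H, hh₀x⟩ := hh₀
    -- a walk from c₀ to h₀ avoiding x
    obtain ⟨W, hWx⟩ := OE_avoid_walk hG2 x c₀ h₀ hc₀x hh₀x
    -- split at the last vertex in C
    obtain ⟨r, W₁, W₂, hrC, hWlen, hrfirst, hW₁sub, hW₂sub⟩ :=
      OE_firstSplit {z | z ∈ C.support} W.reverse (by exact hc₀mem)
    have hxW₁ : x ∉ W₁.support := by
      intro hx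
      exact hWx (by
        have := hW₁sub x hx
        rwa [Walk.support_reverse, List.mem_reverse] at this)
    have hrx : r ≠ x := fun h => hxW₁ (h ▸ W₁.end_mem_support)
    -- split at the first vertex of T ∪ H after r
    obtain ⟨z, P₁, P₂, hzS, hPlen, hzfirst, hP₁sub, hP₂sub⟩ :=
      OE_firstSplit {y | y ∈ T.support ∨ y ∈ H'.verts} W₁.reverse (by exact Or.inr hh₀H)
    set R := P₁.bypass with hR
    have hRpath : R.IsPath := P₁.bypass_isPath
    have hRsubP : ∀ y ∈ R.support, y ∈ P₁.support := fun y hy => P₁.support_bypass_subset hy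
    have hRW₁ : ∀ y ∈ R.support, y ∈ W₁.support := by
      intro y hy
      have := hP₁sub y (hRsubP y hy)
      rwa [Walk.support_reverse, List.mem_reverse] at this
    have hRC : ∀ y ∈ R.support, y ∈ C.support → y = r :=
      fun y hy hyC => hrfirst y (hRW₁ y hy) hyC
    have hRS₂ : ∀ y ∈ R.support, (y ∈ T.support ∨ y ∈ H'.verts) → y = z :=
      fun y hy h2 => hzfirst y (hRsubP y hy) h2
    have hRx : x ∉ R.support := fun hx => hxW₁ (hRW₁ x hx)
    have hzx : z ≠ x := fun h => hRx (h ▸ R.end_mem_support)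
    have hrR : r ∈ R.support := R.start_mem_support
    have hzR : z ∈ R.support := R.end_mem_support
    have hrz : r ≠ z := by
      intro h
      rcases hzS with hzT | hzH
      · exact hzx (hTC z hzT (h ▸ hrC))
      · have hzu : z = u := hCH z (h ▸ hrC) hzH
        have hux : u = x := hTC u T.end_mem_support (hzu ▸ h ▸ hrC)
        exact hzx (hzu.trans hux)
    have hRlen : 1 ≤ R.length := by
      rcases Nat.eq_zero_or_pos R.length with h0 | h1
      · exact absurd (Walk.eq_of_length_eq_zero h0) hrz
      · exact h1
    -- the two arcs of C from x to r
    obtain ⟨A₁, A₂, hA₁p, hA₂p, hAlen, hA₁sub, hA₂sub, hAint⟩ := OE_arcs hC hrC hrx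
    by_cases hzT : z ∈ T.support
    · -- recursion case: z lies on the tail T
      have hzu' : z ∈ H'.verts → z = u := fun h => hTH z hzT h
      set T₁ := T.takeUntil z hzT with hT₁
      set T₂ := T.dropUntil z hzT with hT₂
      have hT₁p : T₁.IsPath := hT.takeUntil hzT
      have hT₂p : T₂.IsPath := hT.dropUntil hzT
      have hTspec : T₁.append T₂ = T := T.take_spec hzT
      have hTlen : T₁.length + T₂.length = T.length := by
        have := congrArg Walk.length hTspec
        rwa [Walk.length_append] at this
      have hT₁len : 1 ≤ T₁.length := by
        rcases Nat.eq_zero_or_pos T₁.length with h0 | h1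
        · exact absurd (Walk.eq_of_length_eq_zero h0).symm hzx
        · exact h1
      have hT₁sub : ∀ y ∈ T₁.support, y ∈ T.support := fun y hy => T.support_takeUntil_subset hzT hy
      have hT₂sub : ∀ y ∈ T₂.support, y ∈ T.support := fun y hy => T.support_dropUntil_subset hzT hy
      have hT₁T₂ : ∀ y ∈ T₁.support, y ∈ T₂.support → y = z := by
        intro y hy1 hy2
        by_contra hne
        have hTnd := (Walk.isPath_def T).mp hT
        rw [← hTspec, Walk.support_append] at hTnd
        have hy2' : y ∈ T₂.support.tail := by
          rw [T₂.support_eq_cons] at hy2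
          rcases List.mem_cons.mp hy2 with rfl | h
          · exact absurd rfl hne
          · exact h
        exact (List.disjoint_of_nodup_append hTnd) hy1 hy2'
      have hxT₂ : x ∉ T₂.support := by
        intro hx
        exact hzx (hT₁T₂ x T₁.start_mem_support hx).symm
      -- choose the arc giving an odd new cycle
      have harc : ∃ A : G'.Walk x r, A.IsPath ∧ (∀ y ∈ A.support, y ∈ C.support) ∧
          Odd (T₁.length + A.length + R.length) ∧ 1 ≤ A.length := by
        have hA₁len : 1 ≤ A₁.length := by
          rcases Nat.eq_zero_or_pos A₁.length with h0 | h1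
          · exact absurd (Walk.eq_of_length_eq_zero h0).symm hrx
          · exact h1
        have hA₂len : 1 ≤ A₂.length := by
          rcases Nat.eq_zero_or_pos A₂.length with h0 | h1
          · exact absurd (Walk.eq_of_length_eq_zero h0).symm hrx
          · exact h1
        by_cases h : Odd (T₁.length + A₁.length + R.length)
        · exact ⟨A₁, hA₁p, hA₁sub, h, hA₁len⟩
        · refine ⟨A₂, hA₂p, hA₂sub, ?_, hA₂len⟩
          rw [Nat.odd_iff] at hCodd ⊢
          rw [Nat.odd_iff] at h
          push_neg at h
          omega
      obtain ⟨A, hAp, hAsub, hAodd, hAlen1⟩ := harc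
      -- build the new cycle based at z
      set Q₁ := T₁.reverse.append A with hQ₁
      have hQ₁p : Q₁.IsPath := by
        refine OE_isPath_append hT₁p.reverse hAp ?_
        intro y hy hyA
        rw [Walk.support_reverse, List.mem_reverse] at hy
        exact hTC y (hT₁sub y hy) (hAsub y hyA)
      have hQ₁sub : ∀ y ∈ Q₁.support, y ∈ T₁.support ∨ y ∈ C.support := by
        intro y hy
        rw [hQ₁, Walk.mem_support_append_iff] at hy
        rcases hy with hy | hy
        · rw [Walk.support_reverse, List.mem_reverse] at hy; exact Or.inl hy
        · exact Or.inr (hAsub y hy)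
      set C'' := Q₁.append R with hC''
      have hC''cyc : C''.IsCycle := by
        refine OE_cycle_of_two_paths hQ₁p hRpath (fun h => hrz h.symm) ?_ ?_
        · intro y hy hyR
          rcases hQ₁sub y hy with hy | hy
          · exact Or.inl (hRS₂ y hyR (Or.inl (hT₁sub y hy)))
          · exact Or.inr (hRC y hyR hy)
        · rw [hQ₁, Walk.length_append, Walk.length_reverse]
          omega
      have hC''len : C''.length = T₁.length + A.length + R.length := by
        rw [hC'', hQ₁, Walk.length_append, Walk.length_append, Walk.length_reverse]
      have hC''odd : Odd C''.length := by rw [hC''len]; exact hAodd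
      have hC''sub : ∀ y ∈ C''.support, y ∈ T₁.support ∨ y ∈ C.support ∨ y ∈ R.support := by
        intro y hy
        rw [hC'', Walk.mem_support_append_iff] at hy
        rcases hy with hy | hy
        · rcases hQ₁sub y hy with h | h
          · exact Or.inl h
          · exact Or.inr (Or.inl h)
        · exact Or.inr (Or.inr hy)
      -- invariants
      have hCH'' : ∀ y ∈ C''.support, y ∈ H'.verts → y = u := by
        intro y hy hyH
        rcases hC''sub y hy with hy | hy | hy
        · exact hTH y (hT₁sub y hy) hyH
        · exact hCH y hy hyH
        · have := hRS₂ y hy (Or.inr hyH)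
          subst this
          exact hTH y hzT hyH
      have hTH₂ : ∀ y ∈ T₂.support, y ∈ H'.verts → y = u :=
        fun y hy h => hTH y (hT₂sub y hy) h
      have hTC₂ : ∀ y ∈ T₂.support, y ∈ C''.support → y = z := by
        intro y hy2 hyC
        rcases hC''sub y hyC with hy | hy | hy
        · exact (hT₁T₂ y hy hy2).symm ▸ (hT₁T₂ y hy hy2)
        · exact absurd ((hTC y (hT₂sub y hy2) hy) ▸ hy2) hxT₂
        · exact hRS₂ y hy (Or.inl (hT₂sub y hy2))
      exact IH T₂.length (by omega) T₂ C'' rfl hC''cyc hC''odd hT₂p hu hCH'' hTH₂ hTC₂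
    · -- ear case: z ∈ H, z ∉ T
      have hzH : z ∈ H'.verts := by
        rcases hzS with h | h
        · exact absurd h hzT
        · exact h
      have hzu : z ≠ u := fun h => hzT (h ▸ T.end_mem_support)
      -- choose the arc giving a bad ear
      have harc : ∃ A : G'.Walk x r, A.IsPath ∧ (∀ y ∈ A.support, y ∈ C.support) ∧
          ((c u = c z) ↔ Odd (T.length + (A.length + R.length))) ∧ 1 ≤ A.length := by
        have hA₁len : 1 ≤ A₁.length := by
          rcases Nat.eq_zero_or_pos A₁.length with h0 | h1
          · exact absurd (Walk.eq_of_length_eq_zero h0).symm hrx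
          · exact h1
        have hA₂len : 1 ≤ A₂.length := by
          rcases Nat.eq_zero_or_pos A₂.length with h0 | h1
          · exact absurd (Walk.eq_of_length_eq_zero h0).symm hrx
          · exact h1
        by_cases h : (c u = c z) ↔ Odd (T.length + (A₁.length + R.length))
        · exact ⟨A₁, hA₁p, hA₁sub, h, hA₁len⟩
        · refine ⟨A₂, hA₂p, hA₂sub, ?_, hA₂len⟩
          have hpar : Odd (T.length + (A₂.length + R.length)) ↔
              ¬ Odd (T.length + (A₁.length + R.length)) := by
            rw [Nat.odd_iff, Nat.odd_iff]
            rw [Nat.odd_iff] at hCodd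
            omega
          rw [hpar]
          tauto
      obtain ⟨A, hAp, hAsub, hAbad, hAlen1⟩ := harc
      set inner := A.append R with hinner
      have hinnerp : inner.IsPath := by
        refine OE_isPath_append hAp hRpath ?_
        intro y hy hyR
        exact hRC y hyR (hAsub y hy)
      set e := T.reverse.append inner with he
      have hep : e.IsPath := by
        refine OE_isPath_append hT.reverse hinnerp ?_
        intro y hy hyI
        rw [Walk.support_reverse, List.mem_reverse] at hy
        rw [hinner, Walk.mem_support_append_iff] at hyI
        rcases hyI with hyA | hyR
        · exact hTC y hy (hAsub y hyA)
        · exact absurd ((hRS₂ y hyR (Or.inl hy)) ▸ hy) (by rw [hRS₂ y hyR (Or.inl hy)] at hy; exact fun _ => hzT hy)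
      have hesub : ∀ y ∈ e.support, y ∈ T.support ∨ y ∈ C.support ∨ y ∈ R.support := by
        intro y hy
        rw [he, Walk.mem_support_append_iff] at hy
        rcases hy with hy | hy
        · rw [Walk.support_reverse, List.mem_reverse] at hy; exact Or.inl hy
        · rw [hinner, Walk.mem_support_append_iff] at hy
          rcases hy with hy | hy
          · exact Or.inr (Or.inl (hAsub y hy))
          · exact Or.inr (Or.inr hy)
      have heH : ∀ y ∈ e.support, y ∈ H'.verts → y = u ∨ y = z := by
        intro y hy hyH
        rcases hesub y hy with hy | hy | hy
        · exact Or.inl (hTH y hy hyH)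
        · exact Or.inl (hCH y hy hyH)
        · exact Or.inr (hRS₂ y hy (Or.inr hyH))
      have helen : e.length = T.length + (A.length + R.length) := by
        rw [he, hinner, Walk.length_append, Walk.length_append, Walk.length_reverse]
      have hear : IsEar H' e := by
        refine ⟨hep, hu, hzH, ?_, ?_⟩
        · intro y hy hyu hyz hyH
          rcases heH y hy hyH with rfl | rfl
          · exact hyu rfl
          · exact hyz rfl
        · intro ed hed hedH
          induction ed with
          | h p q =>
            have hadj : H'.Adj p q := Subgraph.mem_edgeSet.mp hedH
            have hpq : p ≠ q := G'.ne_of_adj (H'.adj_sub hadj)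
            have hpe : p ∈ e.support := Walk.fst_mem_support_of_mem_edges e hed
            have hqe : q ∈ e.support := Walk.snd_mem_support_of_mem_edges e hed
            rcases heH p hpe hadj.fst_mem with rfl | rfl <;>
              rcases heH q hqe hadj.snd_mem with rfl | rfl
            · exact hpq rfl
            · have : e.length = 1 := OE_edge_of_path e hep hed
              omega
            · have : e.length = 1 := OE_edge_of_path e hep (by rwa [Sym2.eq_swap] at hed)
              omega
            · exact hpq rfl
      exact ⟨u, z, e, OE_bad_ear hHb hHconn c hc hear (by rw [helen]; exact hAbad)⟩
lemma OE_parity_two {x y z : Bool} {m n : ℕ} (h : (x = z) ↔ Odd (m + n))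
    (h1 : ¬((x = y) ↔ Odd m)) : (y = z) ↔ Odd n := by
  rw [Nat.odd_iff] at h h1 ⊢
  cases x <;> cases y <;> cases z <;> simp_all <;> omega

lemma OE_main {H' : G'.Subgraph} (hG2 : TwoConnected G')
    (hHb : H'.coe.Colorable 2) (hHconn : H'.coe.Connected) (hH3 : 3 ≤ Nat.card H'.verts)
    (c : V' → Bool) (hc : ∀ x y : V', H'.Adj x y → c x ≠ c y) :
    ∀ (n : ℕ) {u v : V'} (w : G'.Walk u v), w.length = n → u ∈ H'.verts → v ∈ H'.verts →
      ((c u = c v) ↔ Odd w.length) → ∃ (a b : V') (p : G'.Walk a b), IsOddEar H' p := by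
  intro n
  induction n using Nat.strong_induction_on with
  | _ n IH =>
    intro u v w hwn hu hv hbad
    rcases OE_splitH H'.verts w with hstrict | ⟨m, w₁, w₂, hm, hlen, hl1, hl2⟩
    · -- no internal H-vertices (value-wise)
      by_cases hnd : w.support.Nodup
      · -- w is a path
        have hwp : w.IsPath := (Walk.isPath_def w).mpr hnd
        by_cases huv : u = v
        · subst huv
          have : w = Walk.nil := Walk.isPath_iff_eq_nil.mp hwp
          subst this
          simp [Nat.odd_iff] at hbad
        · have hear : IsEar H' w := by
            refine ⟨hwp, hu, hv, ?_, ?_⟩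
            · intro y hy hyu hyv hyH
              rcases hstrict y hy hyH with rfl | rfl
              · exact hyu rfl
              · exact hyv rfl
            · intro ed hed hedH
              induction ed with
              | h p q =>
                have hadj : H'.Adj p q := Subgraph.mem_edgeSet.mp hedH
                have hpq : p ≠ q := G'.ne_of_adj (H'.adj_sub hadj)
                have hpe : p ∈ w.support := Walk.fst_mem_support_of_mem_edges w hed
                have hqe : q ∈ w.support := Walk.snd_mem_support_of_mem_edges w hed
                have hlen1 : w.length = 1 := by
                  rcases hstrict p hpe hadj.fst_mem with rfl | rfl <;>
                    rcases hstrict q hqe hadj.snd_mem with rfl | rfl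
                  · exact absurd rfl hpq
                  · exact OE_edge_of_path w hwp hed
                  · exact OE_edge_of_path w hwp (by rwa [Sym2.eq_swap] at hed)
                  · exact absurd rfl hpq
                have hcuv : c u = c v := hbad.mpr (by rw [hlen1]; exact ⟨0, rfl⟩)
                have hadj' : H'.Adj u v := by
                  rcases hstrict p hpe hadj.fst_mem with rfl | rfl <;>
                    rcases hstrict q hqe hadj.snd_mem with rfl | rfl
                  · exact absurd rfl hpq
                  · exact hadj
                  · exact hadj.symm
                  · exact absurd rfl hpq
                exact hc u v hadj' hcuv
          exact ⟨u, v, w, OE_bad_ear hHb hHconn c hc hear hbad⟩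
      · -- w has a repeated vertex
        obtain ⟨z, w₁, L, w₂, hlen, hL1, hs1, hs2, hs3⟩ := OE_splitDup w hnd
        by_cases h3way : z ∈ H'.verts ∧ L.length < n
        · obtain ⟨hzH, hLlt⟩ := h3way
          by_cases hb1 : (c u = c z) ↔ Odd w₁.length
          · exact IH w₁.length (by omega) w₁ rfl hu hzH hb1
          · have hb2 : (c z = c v) ↔ Odd (L.length + w₂.length) := by
              refine OE_parity_two ?_ hb1
              rw [hlen]
              exact hbad
            by_cases hb3 : (c z = c z) ↔ Odd L.length
            · exact IH L.length hLlt L rfl hzH hzH hb3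
            · exact IH w₂.length (by omega) w₂ rfl hzH hv (OE_parity_two hb2 hb3)
        · -- either z ∉ H, or the loop is the whole walk
          by_cases hLodd : Odd L.length
          · -- extract an odd cycle from the loop
            obtain ⟨y₀, C, hC, hCodd, hCsub⟩ := OE_extract L.length L rfl hLodd
            have hCw : ∀ y ∈ C.support, y ∈ w.support := fun y hy => hs2 y (hCsub y hy)
            have hCne : C ≠ Walk.nil := hC.ne_nil
            have hCHuv : ∀ y ∈ C.support, y ∈ H'.verts → y = u ∨ y = v :=
              fun y hy hyH => hstrict y (hCw y hy) hyH
            by_cases huC : u ∈ C.support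
            · set Cu := C.rotate u huC with hCu
              have hCucyc : Cu.IsCycle := hC.rotate huC
              have hCuodd : Odd Cu.length := by
                rw [hCu, OE_length_rotate]; exact hCodd
              have hCusup : ∀ y, y ∈ Cu.support ↔ y ∈ C.support :=
                fun y => OE_support_rotate_mem C hCne huC y
              by_cases hvC : v ∈ C.support ∧ v ≠ u
              · -- both ends on the cycle: one of the two arcs is a bad ear
                obtain ⟨hvC', hvu⟩ := hvC
                obtain ⟨A₁, A₂, hA₁p, hA₂p, hAlen, hA₁sub, hA₂sub, hAint⟩ :=
                  OE_arcs hCucyc ((hCusup v).mpr hvC') hvu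
                have harc : ∃ A : G'.Walk u v, A.IsPath ∧ (∀ y ∈ A.support, y ∈ C.support) ∧
                    ((c u = c v) ↔ Odd A.length) := by
                  by_cases h : (c u = c v) ↔ Odd A₁.length
                  · exact ⟨A₁, hA₁p, fun y hy => (hCusup y).mp (hA₁sub y hy), h⟩
                  · refine ⟨A₂, hA₂p, fun y hy => (hCusup y).mp (hA₂sub y hy), ?_⟩
                    have hpar : Odd A₂.length ↔ ¬ Odd A₁.length := by
                      have : Odd Cu.length := hCuodd
                      rw [Nat.odd_iff] at this ⊢
                      rw [Nat.odd_iff]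
                      omega
                    rw [hpar]
                    tauto
                obtain ⟨A, hAp, hAsub, hAbad⟩ := harc
                have hear : IsEar H' A := by
                  refine ⟨hAp, hu, hv, ?_, ?_⟩
                  · intro y hy hyu hyv hyH
                    rcases hCHuv y (hAsub y hy) hyH with rfl | rfl
                    · exact hyu rfl
                    · exact hyv rfl
                  · intro ed hed hedH
                    induction ed with
                    | h p q =>
                      have hadj : H'.Adj p q := Subgraph.mem_edgeSet.mp hedH
                      have hpq : p ≠ q := G'.ne_of_adj (H'.adj_sub hadj)
                      have hpe : p ∈ A.support := Walk.fst_mem_support_of_mem_edges A hed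
                      have hqe : q ∈ A.support := Walk.snd_mem_support_of_mem_edges A hed
                      have hlen1 : A.length = 1 := by
                        rcases hCHuv p (hAsub p hpe) hadj.fst_mem with rfl | rfl <;>
                          rcases hCHuv q (hAsub q hqe) hadj.snd_mem with rfl | rfl
                        · exact absurd rfl hpq
                        · exact OE_edge_of_path A hAp hed
                        · exact OE_edge_of_path A hAp (by rwa [Sym2.eq_swap] at hed)
                        · exact absurd rfl hpq
                      have hcuv : c u = c v := hAbad.mpr (by rw [hlen1]; exact ⟨0, rfl⟩)
                      have hadj' : H'.Adj u v := by
                        rcases hCHuv p (hAsub p hpe) hadj.fst_mem with rfl | rfl <;>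
                          rcases hCHuv q (hAsub q hqe) hadj.snd_mem with rfl | rfl
                        · exact absurd rfl hpq
                        · exact hadj
                        · exact hadj.symm
                        · exact absurd rfl hpq
                      exact hc u v hadj' hcuv
                exact ⟨u, v, A, OE_bad_ear hHb hHconn c hc hear hAbad⟩
              · -- only u on the cycle: lollipop with empty tail
                refine OE_lolli hG2 hHb hHconn hH3 c hc 0 (Walk.nil) Cu rfl hCucyc hCuodd
                  Walk.IsPath.nil hu ?_ ?_ ?_
                · intro y hy hyH
                  push_neg at hvC
                  rcases hCHuv y ((hCusup y).mp hy) hyH with h | h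
                  · exact h
                  · exact h.trans (hvC (h ▸ (hCusup y).mp hy))
                · intro y hy hyH
                  simp at hy
                  subst hy; rfl
                · intro y hy _
                  simp at hy
                  exact hy
            · by_cases hvC : v ∈ C.support
              · -- only v on the cycle
                set Cv := C.rotate v hvC with hCv
                have hCvcyc : Cv.IsCycle := hC.rotate hvC
                have hCvodd : Odd Cv.length := by
                  rw [hCv, OE_length_rotate]; exact hCodd
                have hCvsup : ∀ y, y ∈ Cv.support ↔ y ∈ C.support :=
                  fun y => OE_support_rotate_mem C hCne hvC y
                refine OE_lolli hG2 hHb hHconn hH3 c hc 0 (Walk.nil) Cv rfl hCvcyc hCvodd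
                  Walk.IsPath.nil hv ?_ ?_ ?_
                · intro y hy hyH
                  rcases hCHuv y ((hCvsup y).mp hy) hyH with rfl | rfl
                  · exact absurd ((hCvsup y).mp hy) huC
                  · rfl
                · intro y hy hyH
                  simp at hy
                  subst hy; rfl
                · intro y hy _
                  simp at hy
                  exact hy
              · -- the cycle avoids H entirely: build a tail from it to H
                have hy₀w : y₀ ∈ w.support := hCw y₀ C.start_mem_support
                set T₀ := w.takeUntil y₀ hy₀w with hT₀
                have hT₀sub : ∀ y ∈ T₀.support, y ∈ w.support :=
                  fun y hy => w.support_takeUntil_subset hy₀w hy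
                obtain ⟨h', Q₁, Q₂, hh'H, hQlen, hh'first, hQ₁sub, hQ₂sub⟩ :=
                  OE_firstSplit H'.verts T₀.reverse (by exact hu)
                have hQ₁sub' : ∀ y ∈ Q₁.support, y ∈ w.support := by
                  intro y hy
                  have := hQ₁sub y hy
                  rw [Walk.support_reverse, List.mem_reverse] at this
                  exact hT₀sub y this
                obtain ⟨s, P, P', hsC, hPlen, hsfirst, hPsub, hP'sub⟩ :=
                  OE_firstSplit {y | y ∈ C.support} Q₁.reverse (by exact C.start_mem_support)
                have hPsub' : ∀ y ∈ P.support, y ∈ Q₁.support := by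
                  intro y hy
                  have := hPsub y hy
                  rwa [Walk.support_reverse, List.mem_reverse] at this
                set T := P.reverse.bypass with hT
                have hTp : T.IsPath := _root_.SimpleGraph.Walk.bypass_isPath _
                have hTsub : ∀ y ∈ T.support, y ∈ P.support := by
                  intro y hy
                  have := P.reverse.support_bypass_subset hy
                  rwa [Walk.support_reverse, List.mem_reverse] at this
                set Cs := C.rotate s hsC with hCs
                have hCscyc : Cs.IsCycle := hC.rotate hsC
                have hCsodd : Odd Cs.length := by
                  rw [hCs, OE_length_rotate]; exact hCodd
                have hCssup : ∀ y, y ∈ Cs.support ↔ y ∈ C.support :=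
                  fun y => OE_support_rotate_mem C hCne hsC y
                refine OE_lolli hG2 hHb hHconn hH3 c hc T.length T Cs rfl hCscyc hCsodd
                  hTp hh'H ?_ ?_ ?_
                · intro y hy hyH
                  rcases hCHuv y ((hCssup y).mp hy) hyH with rfl | rfl
                  · exact absurd ((hCssup y).mp hy) huC
                  · exact absurd ((hCssup y).mp hy) hvC
                · intro y hy hyH
                  exact hh'first y (hPsub' y (hTsub y hy)) hyH
                · intro y hy hyC
                  exact hsfirst y (hTsub y hy) ((hCssup y).mp hyC)
          · -- the loop is even: strip it
            have hLev : Even L.length := Nat.not_odd_iff_even.mp hLodd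
            set w' := w₁.append w₂ with hw'
            have hw'len : w'.length = w₁.length + w₂.length := Walk.length_append _ _
            have hbad' : (c u = c v) ↔ Odd w'.length := by
              rw [hw'len]
              rw [hbad]
              obtain ⟨k, hk⟩ := hLev
              rw [Nat.odd_iff, Nat.odd_iff]
              omega
            exact IH w'.length (by omega) w' rfl hu hv hbad'
    · -- internal H-vertex: split
      by_cases hb1 : (c u = c m) ↔ Odd w₁.length
      · exact IH w₁.length (by omega) w₁ rfl hu hm hb1
      · refine IH w₂.length (by omega) w₂ rfl hm hv (OE_parity_two ?_ hb1)
        rw [hlen]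
        exact hbad

end OddEarAux2

/-- Let `H` be a 2-connected bipartite subgraph of a 2-connected
non-bipartite graph `G`.  Then there exists an odd `H`-ear in `G`. -/
theorem exists_odd_ear {V : Type} [Fintype V] (G : SimpleGraph V) (H : G.Subgraph)
    (hG2 : TwoConnected G) (hGnb : ¬ G.Colorable 2)
    (hH2 : TwoConnected H.coe) (hHb : H.coe.Colorable 2) :
    ∃ (a b : V) (p : G.Walk a b), IsOddEar H p := by
  classical
  obtain ⟨c, hc⟩ := OE_bool_coloring H hHb
  have hHconn := OE_twoConnected_connected hH2
  have hH3 : 3 ≤ Nat.card H.verts := hH2.1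
  have hGconn := OE_twoConnected_connected hG2
  have hne : Nonempty H.verts := (Nat.card_pos_iff.mp (by omega)).1
  obtain ⟨⟨h₀, hh₀⟩⟩ := hne
  have hodd : ∃ w : G.Walk h₀ h₀, Odd w.length := by
    by_contra hno
    push_neg at hno
    simp only [Nat.not_odd_iff_even] at hno
    let P : ∀ v : V, G.Walk h₀ v := fun v => Classical.choice (hGconn.preconnected h₀ v)
    have hd : ∀ a b : V, G.Adj a b →
        (decide (Odd (P a).length)) ≠ decide (Odd (P b).length) := by
      intro a b hadj heq
      have hcl := hno ((P a).append (Walk.cons hadj (P b).reverse))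
      rw [Walk.length_append, Walk.length_cons, Walk.length_reverse] at hcl
      have hiff : Odd (P a).length ↔ Odd (P b).length := by
        constructor
        · intro h; by_contra h2; rw [decide_eq_decide] at heq; exact h2 (heq.mp h)
        · intro h; by_contra h2; rw [decide_eq_decide] at heq; exact h2 (heq.mpr h)
      rw [Nat.even_iff] at hcl
      rw [Nat.odd_iff, Nat.odd_iff] at hiff
      omega
    have col : G.Coloring Bool :=
      Coloring.mk (fun v => decide (Odd (P v).length)) (fun {a b} hadj => hd a b hadj)
    have := col.colorable
    rw [Fintype.card_bool] at this
    exact hGnb this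
  obtain ⟨w, hw⟩ := hodd
  exact OE_main hG2 hHb hHconn hH3 c hc w.length w rfl hh₀ hh₀ ⟨fun _ => hw, fun _ => rfl⟩
end

section
/- For every integer k ≥ 1, the B-blind-treewidth of the singly parity-breaking grid S_k equals tw(S_k) + 1. -/
open SimpleGraph

/-! ### Auxiliary material for Statement 5 -/

section Aux

open SimpleGraph Walk

/-- The trivial one-bag tree-decomposition. -/
noncomputable def trivialTD {V : Type} (G : SimpleGraph V) : TreeDecomposition G where
  τ := Unit
  tree := ⊥
  tree_isTree := by
    constructor
    · exact ⟨fun u v => by rw [Subsingleton.elim u v]⟩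
    · intro v c hc
      cases c with
      | nil => exact hc.ne_nil rfl
      | cons h _ => exact h.elim
  bag := fun _ => Set.univ
  bag_cover := fun v => ⟨(), trivial⟩
  bag_edge := fun u v _ => ⟨(), trivial, trivial⟩
  bag_conn := by
    intro v
    haveI : Nonempty ({t : Unit | v ∈ (Set.univ : Set V)} : Set Unit) := ⟨⟨(), trivial⟩⟩
    exact ⟨fun a b => by rw [Subsingleton.elim a b]⟩

/-- Abstract computation of the `B`-blind-treewidth. -/
lemma blindTwB_eq_of_bad {V : Type} [Finite V] [Nonempty V] (G : SimpleGraph V)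
    (c₁ c₂ : V) (hne : c₁ ≠ c₂) (hadj : G.Adj c₁ c₂)
    (hbad1 : ∀ X : Set V, c₁ ∈ X → c₂ ∈ X → ¬ GloballyBipartite G X)
    (hbad3 : ∀ X : Set V, 3 ≤ X.ncard → ¬ GloballyBipartite G X) :
    blindTwB G = treewidth G + 1 := by
  classical
  have hVfin : (Set.univ : Set V).Finite := Set.finite_univ
  have bagBound : ∀ (D : TreeDecomposition G) (t : D.τ), (D.bag t).ncard ≤ Nat.card V := by
    intro D t
    simpa [Set.ncard_univ] using Set.ncard_le_ncard (Set.subset_univ (D.bag t)) hVfin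
  have sizesBdd : ∀ D : TreeDecomposition G,
      BddAbove {n | ∃ t, n = (D.bag t).ncard} :=
    fun D => ⟨Nat.card V, fun n ⟨t, ht⟩ => ht ▸ bagBound D t⟩
  have badBdd : ∀ D : TreeDecomposition G,
      BddAbove {n | ∃ t, ¬ GloballyBipartite G (D.bag t) ∧ n = (D.bag t).ncard} :=
    fun D => ⟨Nat.card V, fun n ⟨t, _, ht⟩ => ht ▸ bagBound D t⟩
  have sizesNe : ∀ D : TreeDecomposition G,
      {n | ∃ t, n = (D.bag t).ncard}.Nonempty := by
    intro D
    obtain ⟨t₀, _⟩ := D.bag_cover (Classical.arbitrary V)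
    exact ⟨(D.bag t₀).ncard, t₀, rfl⟩
  have Msize : ∀ D : TreeDecomposition G,
      sSup {n | ∃ t, n = (D.bag t).ncard} = D.width + 1 := by
    intro D
    obtain ⟨t₀, ht₀⟩ := D.bag_cover (Classical.arbitrary V)
    have h2 : 1 ≤ (D.bag t₀).ncard := by
      rw [Nat.one_le_iff_ne_zero, Ne, Set.ncard_eq_zero (hVfin.subset (Set.subset_univ _))]
      exact fun h => by simp [h] at ht₀
    have h1 : 1 ≤ sSup {n | ∃ t, n = (D.bag t).ncard} :=
      le_trans h2 (le_csSup (sizesBdd D) ⟨t₀, rfl⟩)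
    show _ = sSup {n | ∃ t, n = (D.bag t).ncard} - 1 + 1
    omega
  have Wne : {n | ∃ D : TreeDecomposition G, D.width = n}.Nonempty :=
    ⟨(trivialTD G).width, trivialTD G, rfl⟩
  obtain ⟨D₀, hD₀⟩ := Nat.sInf_mem Wne
  rw [show blindTwB G = sInf {n | ∃ D : TreeDecomposition G,
      D.blindWidth (fun X => GloballyBipartite G X) = n} from rfl]
  apply le_antisymm
  · -- upper bound
    have hb : D₀.blindWidth (fun X => GloballyBipartite G X) ≤ treewidth G + 1 := by
      unfold TreeDecomposition.blindWidth
      rcases Set.eq_empty_or_nonempty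
        {n | ∃ t, ¬ GloballyBipartite G (D₀.bag t) ∧ n = (D₀.bag t).ncard} with he | hne'
      · rw [he, csSup_empty]; exact Nat.zero_le _
      · apply csSup_le hne'
        rintro n ⟨t, -, rfl⟩
        calc (D₀.bag t).ncard ≤ sSup {n | ∃ t, n = (D₀.bag t).ncard} :=
              le_csSup (sizesBdd D₀) ⟨t, rfl⟩
          _ = D₀.width + 1 := Msize D₀
          _ = treewidth G + 1 := by rw [hD₀]; rfl
    exact le_trans (Nat.sInf_le ⟨D₀, rfl⟩) hb
  · -- lower bound
    have hBWne : {n | ∃ D : TreeDecomposition G,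
        D.blindWidth (fun X => GloballyBipartite G X) = n}.Nonempty :=
      ⟨_, trivialTD G, rfl⟩
    apply le_csInf hBWne
    rintro b ⟨D, rfl⟩
    have htw : treewidth G ≤ D.width := Nat.sInf_le ⟨D, rfl⟩
    rcases le_or_gt (treewidth G) 1 with hc | hc
    · -- small treewidth case: the bag containing the special edge is bad
      obtain ⟨t₀, h₁, h₂⟩ := D.bag_edge hadj
      have hbad : ¬ GloballyBipartite G (D.bag t₀) := hbad1 _ h₁ h₂
      have hcard : 2 ≤ (D.bag t₀).ncard := by
        have : ({c₁, c₂} : Set V).ncard ≤ (D.bag t₀).ncard := by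
          apply Set.ncard_le_ncard _ (hVfin.subset (Set.subset_univ _))
          intro z hz
          rcases hz with rfl | hz
          · exact h₁
          · rw [Set.mem_singleton_iff] at hz; exact hz ▸ h₂
        rwa [Set.ncard_pair hne] at this
      have : 2 ≤ D.blindWidth (fun X => GloballyBipartite G X) :=
        le_trans hcard (le_csSup (badBdd D) ⟨t₀, hbad, rfl⟩)
      omega
    · -- large treewidth case: a maximum-size bag is bad
      obtain ⟨t₁, ht₁⟩ := Nat.sSup_mem (sizesNe D) (sizesBdd D)
      have hsz : (D.bag t₁).ncard = D.width + 1 := by rw [← ht₁, Msize D]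
      have h3 : 3 ≤ (D.bag t₁).ncard := by omega
      have hbad : ¬ GloballyBipartite G (D.bag t₁) := hbad3 _ h3
      have : (D.bag t₁).ncard ≤ D.blindWidth (fun X => GloballyBipartite G X) :=
        le_csSup (badBdd D) ⟨t₁, hbad, rfl⟩
      omega


/-- Position function for the snake path in the `2k × 2k` grid. -/
def gfun (k m : ℕ) : ℕ × ℕ :=
  if m < k then (k - 1, k - 1 - m)
  else if m < 2 * k - 1 then (2 * k - 2 - m, 0)
  else if m < 2 * k - 1 + (2 * k - 1) * (k - 1) then
    (if (m - (2 * k - 1)) / (k - 1) % 2 = 0 then (m - (2 * k - 1)) % (k - 1)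
     else k - 2 - (m - (2 * k - 1)) % (k - 1),
     (m - (2 * k - 1)) / (k - 1) + 1)
  else if m < 2 * k - 1 + (2 * k - 1) * (k - 1) + k then
    (k - 1, 2 * k - 1 - (m - (2 * k - 1 + (2 * k - 1) * (k - 1))))
  else (k, k)

/-- Inverse of `gfun`. -/
def ginv (k : ℕ) (p : ℕ × ℕ) : ℕ :=
  if p.1 = k - 1 ∧ p.2 < k then k - 1 - p.2
  else if p.1 = k - 1 then 2 * k - 1 + (2 * k - 1) * (k - 1) + (2 * k - 1 - p.2)
  else if p.1 = k ∧ p.2 = k then 2 * k - 1 + (2 * k - 1) * (k - 1) + k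
  else if p.2 = 0 then 2 * k - 2 - p.1
  else 2 * k - 1 + (k - 1) * (p.2 - 1) + (if p.2 % 2 = 1 then p.1 else k - 2 - p.1)

lemma gfun_zero (k : ℕ) (hk : 1 ≤ k) : gfun k 0 = (k - 1, k - 1) := by
  unfold gfun
  rw [if_pos (by omega : (0:ℕ) < k)]
  simp

lemma gfun_last (k : ℕ) (hk : 1 ≤ k) :
    gfun k (2 * k - 1 + (2 * k - 1) * (k - 1) + k) = (k, k) := by
  unfold gfun
  rw [if_neg (by omega), if_neg (by omega), if_neg (by omega), if_neg (by omega)]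

lemma divmod_eq {b q r : ℕ} (h : r < b) : (b * q + r) / b = q ∧ (b * q + r) % b = r :=
  ⟨by rw [Nat.mul_add_div (by omega), Nat.div_eq_of_lt h, add_zero],
   by rw [Nat.mul_add_mod, Nat.mod_eq_of_lt h]⟩

lemma gfunA {k m : ℕ} (h : m < k) : gfun k m = (k - 1, k - 1 - m) := by
  unfold gfun; rw [if_pos h]

lemma gfunB {k m : ℕ} (h1 : k ≤ m) (h2 : m < 2 * k - 1) : gfun k m = (2 * k - 2 - m, 0) := by
  unfold gfun; rw [if_neg (by omega), if_pos h2]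

lemma gfunC {k m q r : ℕ} (hk2 : 2 ≤ k) (hm : m = 2 * k - 1 + ((k - 1) * q + r))
    (hr : r < k - 1) (hq : q < 2 * k - 1) :
    gfun k m = (if q % 2 = 0 then r else k - 2 - r, q + 1) := by
  have ht : m - (2 * k - 1) = (k - 1) * q + r := by omega
  have hd := (divmod_eq (q := q) hr).1
  have hmo := (divmod_eq (q := q) hr).2
  have hlt : m < 2 * k - 1 + (2 * k - 1) * (k - 1) := by
    have h1 : (k - 1) * q + r < (k - 1) * (q + 1) := by
      rw [Nat.mul_add, Nat.mul_one]; omega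
    have h2 : (k - 1) * (q + 1) ≤ (k - 1) * (2 * k - 1) := Nat.mul_le_mul_left _ (by omega)
    have h3 : (k - 1) * (2 * k - 1) = (2 * k - 1) * (k - 1) := Nat.mul_comm _ _
    omega
  unfold gfun
  rw [if_neg (by omega), if_neg (by omega), if_pos hlt, ht, hd, hmo]

lemma gfunD {k m : ℕ} (h1 : 2 * k - 1 + (2 * k - 1) * (k - 1) ≤ m)
    (h2 : m < 2 * k - 1 + (2 * k - 1) * (k - 1) + k) :
    gfun k m = (k - 1, 2 * k - 1 - (m - (2 * k - 1 + (2 * k - 1) * (k - 1)))) := by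
  unfold gfun
  rw [if_neg (by omega), if_neg (by omega), if_neg (by omega), if_pos h2]

lemma cReg {k m : ℕ} (h1 : 2 * k - 1 ≤ m) (h2 : m < 2 * k - 1 + (2 * k - 1) * (k - 1)) :
    ∃ q r, 2 ≤ k ∧ q < 2 * k - 1 ∧ r < k - 1 ∧ m = 2 * k - 1 + ((k - 1) * q + r) := by
  have hkk : 2 ≤ k := by
    by_contra h
    have h0 : k - 1 = 0 := by omega
    rw [h0, Nat.mul_zero] at h2
    omega
  have hK : 0 < k - 1 := by omega
  refine ⟨(m - (2 * k - 1)) / (k - 1), (m - (2 * k - 1)) % (k - 1), hkk, ?_, Nat.mod_lt _ hK, ?_⟩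
  · rw [Nat.div_lt_iff_lt_mul hK]
    omega
  · have := Nat.div_add_mod (m - (2 * k - 1)) (k - 1)
    omega


lemma gfun_adj (k m : ℕ) (hk : 1 ≤ k) (hm : m + 1 ≤ 2 * k - 1 + (2 * k - 1) * (k - 1) + k) :
    GridRel (gfun k m) (gfun k (m + 1)) ∨ GridRel (gfun k (m + 1)) (gfun k m) := by
  rcases Nat.lt_or_ge (m + 1) k with h1 | h1
  · -- A, A
    rw [gfunA (by omega), gfunA h1]
    simp only [GridRel, true_and, and_true, true_or, or_true] <;> omega
  rcases Nat.lt_or_ge m k with h2 | h2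
  · -- m = k - 1, last of A
    rw [gfunA h2]
    rcases Nat.lt_or_ge (m + 1) (2 * k - 1) with h3 | h3
    · -- B
      rw [gfunB h1 h3]
      simp only [GridRel, true_and, and_true, true_or, or_true] <;> omega
    · -- k = 1, next is region D
      have hk1 : k = 1 := by omega
      subst hk1
      rw [gfunD (by omega) (by omega)]
      simp only [GridRel, true_and, and_true, true_or, or_true] <;> omega
  rcases Nat.lt_or_ge (m + 1) (2 * k - 1) with h3 | h3
  · -- B, B
    rw [gfunB h2 (by omega), gfunB (by omega) h3]
    simp only [GridRel, true_and, and_true, true_or, or_true] <;> omega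
  rcases Nat.lt_or_ge m (2 * k - 1) with h4 | h4
  · -- m = 2k - 2, last of B; next is first of C
    have hk2 : 2 ≤ k := by omega
    rw [gfunB h2 h4, gfunC hk2 (q := 0) (r := 0) (by omega) (by omega) (by omega)]
    rw [if_pos (by omega : (0:ℕ) % 2 = 0)]
    simp only [GridRel, true_and, and_true, true_or, or_true] <;> omega
  -- now m ≥ 2k - 1
  rcases Nat.lt_or_ge (m + 1) (2 * k - 1 + (2 * k - 1) * (k - 1)) with h5 | h5
  · -- C, C
    obtain ⟨q, r, hk2, hq, hr, hm'⟩ := cReg h4 (by omega)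
    rw [gfunC hk2 hm' hr hq]
    rcases Nat.lt_or_ge (r + 1) (k - 1) with h6 | h6
    · -- same column
      have hm'' : m + 1 = 2 * k - 1 + ((k - 1) * q + (r + 1)) := by omega
      rw [gfunC hk2 hm'' h6 hq]
      rcases Nat.decEq (q % 2) 0 with hq2 | hq2
      · rw [if_neg hq2, if_neg hq2]
        simp only [GridRel, true_and, and_true, true_or, or_true] <;> omega
      · rw [if_pos hq2, if_pos hq2]
        simp only [GridRel, true_and, and_true, true_or, or_true] <;> omega
    · -- column change: r = k - 2
      have hr' : r = k - 2 := by omega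
      have hq1 : q + 1 < 2 * k - 1 := by
        by_contra hcon
        have hq1' : q = 2 * k - 2 := by omega
        have e : (2 * k - 1) * (k - 1) = (k - 1) * (2 * k - 2) + (k - 1) := by
          have e2 : (2 : ℕ) * k - 2 + 1 = 2 * k - 1 := by omega
          calc (2 * k - 1) * (k - 1) = (k - 1) * (2 * k - 1) := Nat.mul_comm _ _
            _ = (k - 1) * (2 * k - 2 + 1) := by rw [e2]
            _ = (k - 1) * (2 * k - 2) + (k - 1) := by rw [Nat.mul_add, Nat.mul_one]
        rw [hq1'] at hm'
        omega
      have hmul : (k - 1) * (q + 1) = (k - 1) * q + (k - 1) := by rw [Nat.mul_add, Nat.mul_one]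
      have hm'' : m + 1 = 2 * k - 1 + ((k - 1) * (q + 1) + 0) := by omega
      rw [gfunC hk2 hm'' (by omega) hq1]
      rcases Nat.decEq (q % 2) 0 with hq2 | hq2
      · rw [if_neg hq2, if_pos (by omega : (q + 1) % 2 = 0)]
        simp only [GridRel, true_and, and_true, true_or, or_true] <;> omega
      · rw [if_pos hq2, if_neg (by omega : ¬ (q + 1) % 2 = 0)]
        simp only [GridRel, true_and, and_true, true_or, or_true] <;> omega
  rcases Nat.lt_or_ge m (2 * k - 1 + (2 * k - 1) * (k - 1)) with h6 | h6
  · -- m is last of C, m + 1 is first of D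
    obtain ⟨q, r, hk2, hq, hr, hm'⟩ := cReg h4 h6
    rw [gfunC hk2 hm' hr hq, gfunD (by omega) (by omega)]
    have e : (2 * k - 1) * (k - 1) = (k - 1) * (2 * k - 2) + (k - 1) := by
      have e2 : (2 : ℕ) * k - 2 + 1 = 2 * k - 1 := by omega
      calc (2 * k - 1) * (k - 1) = (k - 1) * (2 * k - 1) := Nat.mul_comm _ _
        _ = (k - 1) * (2 * k - 2 + 1) := by rw [e2]
        _ = (k - 1) * (2 * k - 2) + (k - 1) := by rw [Nat.mul_add, Nat.mul_one]
    have hq' : q = 2 * k - 2 := by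
      by_contra hcon
      have hqle : q + 1 ≤ 2 * k - 2 := by omega
      have h8 : (k - 1) * (q + 1) ≤ (k - 1) * (2 * k - 2) := Nat.mul_le_mul_left _ hqle
      have h7 : (k - 1) * (q + 1) = (k - 1) * q + (k - 1) := by rw [Nat.mul_add, Nat.mul_one]
      omega
    have hr' : r = k - 2 := by
      rw [hq'] at hm'
      omega
    rw [hq', hr', if_pos (by omega : (2 * k - 2) % 2 = 0)]
    simp only [GridRel, true_and, and_true, true_or, or_true] <;> omega
  rcases Nat.lt_or_ge (m + 1) (2 * k - 1 + (2 * k - 1) * (k - 1) + k) with h7 | h7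
  · -- D, D
    rw [gfunD h6 (by omega), gfunD (by omega) h7]
    simp only [GridRel, true_and, and_true, true_or, or_true] <;> omega
  · -- m + 1 is the last position (k, k)
    have hm1 : m + 1 = 2 * k - 1 + (2 * k - 1) * (k - 1) + k := by omega
    rw [gfunD h6 (by omega), hm1, gfun_last k hk]
    simp only [GridRel, true_and, and_true, true_or, or_true] <;> omega

lemma gfun_bounds (k m : ℕ) (hk : 1 ≤ k) (hm : m ≤ 2 * k - 1 + (2 * k - 1) * (k - 1) + k) :
    (gfun k m).1 < 2 * k ∧ (gfun k m).2 < 2 * k := by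
  rcases Nat.lt_or_ge m k with h1 | h1
  · rw [gfunA h1]; constructor <;> simp <;> omega
  rcases Nat.lt_or_ge m (2 * k - 1) with h2 | h2
  · rw [gfunB h1 h2]; constructor <;> simp <;> omega
  rcases Nat.lt_or_ge m (2 * k - 1 + (2 * k - 1) * (k - 1)) with h3 | h3
  · obtain ⟨q, r, hk2, hq, hr, hm'⟩ := cReg h2 h3
    rw [gfunC hk2 hm' hr hq]
    rcases Nat.decEq (q % 2) 0 with hq2 | hq2
    · rw [if_neg hq2]; constructor <;> simp <;> omega
    · rw [if_pos hq2]; constructor <;> simp <;> omega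
  rcases Nat.lt_or_ge m (2 * k - 1 + (2 * k - 1) * (k - 1) + k) with h4 | h4
  · rw [gfunD h3 h4]; constructor <;> simp <;> omega
  · have : m = 2 * k - 1 + (2 * k - 1) * (k - 1) + k := by omega
    rw [this, gfun_last k hk]; constructor <;> simp <;> omega

lemma ginv_gfun (k m : ℕ) (hk : 1 ≤ k)
    (hm : m ≤ 2 * k - 1 + (2 * k - 1) * (k - 1) + k) : ginv k (gfun k m) = m := by
  rcases Nat.lt_or_ge m k with h1 | h1
  · rw [gfunA h1]
    unfold ginv
    rw [if_pos (by constructor <;> simp <;> omega)]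
    simp
    omega
  rcases Nat.lt_or_ge m (2 * k - 1) with h2 | h2
  · rw [gfunB h1 h2]
    unfold ginv
    rw [if_neg (by simp <;> omega), if_neg (by simp <;> omega), if_neg (by simp <;> omega),
      if_pos (by simp)]
    simp
    omega
  rcases Nat.lt_or_ge m (2 * k - 1 + (2 * k - 1) * (k - 1)) with h3 | h3
  · obtain ⟨q, r, hk2, hq, hr, hm'⟩ := cReg h2 h3
    rw [gfunC hk2 hm' hr hq]
    unfold ginv
    have hrow : (if q % 2 = 0 then r else k - 2 - r) ≤ k - 2 := by
      rcases Nat.decEq (q % 2) 0 with hq2 | hq2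
      · rw [if_neg hq2]; omega
      · rw [if_pos hq2]; omega
    rw [if_neg (by simp <;> omega), if_neg (by simp <;> omega), if_neg (by simp <;> omega),
      if_neg (by simp)]
    simp only
    have e1 : q + 1 - 1 = q := by omega
    rw [e1]
    rcases Nat.decEq (q % 2) 0 with hq2 | hq2
    · rw [if_neg hq2, if_neg (by omega : ¬ (q + 1) % 2 = 1)]
      omega
    · rw [if_pos hq2, if_pos (by omega : (q + 1) % 2 = 1)]
      omega
  rcases Nat.lt_or_ge m (2 * k - 1 + (2 * k - 1) * (k - 1) + k) with h4 | h4
  · rw [gfunD h3 h4]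
    unfold ginv
    rw [if_neg (by simp <;> omega), if_pos (by simp)]
    simp
    omega
  · have hme : m = 2 * k - 1 + (2 * k - 1) * (k - 1) + k := by omega
    rw [hme, gfun_last k hk]
    unfold ginv
    rw [if_neg (by simp <;> omega), if_neg (by simp <;> omega), if_pos (by simp)]

lemma gfun_surj (k a b : ℕ) (hk : 1 ≤ k) (ha : a < k) (hb : b < 2 * k) :
    ∃ m, m ≤ 2 * k - 1 + (2 * k - 1) * (k - 1) + k ∧ gfun k m = (a, b) := by
  rcases Nat.decEq a (k - 1) with ha1 | ha1
  · -- a < k - 1, so k ≥ 2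
    have hk2 : 2 ≤ k := by omega
    rcases Nat.decEq b 0 with hb1 | hb1
    · -- region C
      have hq : b - 1 < 2 * k - 1 := by omega
      have hr : (if b % 2 = 1 then a else k - 2 - a) < k - 1 := by
        rcases Nat.decEq (b % 2) 1 with h | h
        · rw [if_neg h]; omega
        · rw [if_pos h]; omega
      refine ⟨2 * k - 1 + ((k - 1) * (b - 1) + (if b % 2 = 1 then a else k - 2 - a)), ?_, ?_⟩
      · have h1 : (k - 1) * (b - 1) + (if b % 2 = 1 then a else k - 2 - a)
            < (k - 1) * (b - 1 + 1) := by
          rw [Nat.mul_add, Nat.mul_one]; omega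
        have h2 : (k - 1) * (b - 1 + 1) ≤ (k - 1) * (2 * k - 1) :=
          Nat.mul_le_mul_left _ (by omega)
        have h3 : (k - 1) * (2 * k - 1) = (2 * k - 1) * (k - 1) := Nat.mul_comm _ _
        omega
      · rw [gfunC hk2 rfl hr hq]
        have e1 : b - 1 + 1 = b := by omega
        rcases Nat.decEq (b % 2) 1 with h | h
        · rw [if_neg h] at *
          rw [if_neg (by omega : ¬ (b - 1) % 2 = 0), e1]
          have : k - 2 - (k - 2 - a) = a := by omega
          rw [this]
        · rw [if_pos h] at *
          rw [if_pos (by omega : (b - 1) % 2 = 0), e1]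
    · -- region B
      refine ⟨2 * k - 2 - a, ?_, ?_⟩
      · omega
      · rw [gfunB (by omega) (by omega), hb1]
        have : 2 * k - 2 - (2 * k - 2 - a) = a := by omega
        rw [this]
  · -- a = k - 1
    rcases Nat.lt_or_ge b k with hb1 | hb1
    · refine ⟨k - 1 - b, by omega, ?_⟩
      rw [gfunA (by omega), ha1]
      have : k - 1 - (k - 1 - b) = b := by omega
      rw [this]
    · refine ⟨2 * k - 1 + (2 * k - 1) * (k - 1) + (2 * k - 1 - b), by omega, ?_⟩
      rw [gfunD (by omega) (by omega), ha1]
      have : 2 * k - 1 - (2 * k - 1 + (2 * k - 1) * (k - 1) + (2 * k - 1 - b)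
          - (2 * k - 1 + (2 * k - 1) * (k - 1))) = b := by omega
      rw [this]

lemma len_odd (k : ℕ) (hk : 1 ≤ k) :
    2 * k - 1 + (2 * k - 1) * (k - 1) + k + 1 = 2 * (k * k) + 1 := by
  obtain ⟨K, rfl⟩ : ∃ K, k = K + 1 := ⟨k - 1, by omega⟩
  have e1 : 2 * (K + 1) - 1 = 2 * K + 1 := by omega
  have e2 : K + 1 - 1 = K := by omega
  rw [e1, e2]
  ring

open SimpleGraph in
def walkFromFn {V : Type} (G : SimpleGraph V) (f : ℕ → V) :
    (len : ℕ) → (∀ i, i < len → G.Adj (f i) (f (i + 1))) → G.Walk (f 0) (f len)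
  | 0, _ => SimpleGraph.Walk.nil
  | (l + 1), h =>
      (walkFromFn G f l (fun i hi => h i (by omega))).concat (h l (by omega))

open SimpleGraph in
lemma walkFromFn_support {V : Type} (G : SimpleGraph V) (f : ℕ → V) :
    ∀ (len : ℕ) (h : ∀ i, i < len → G.Adj (f i) (f (i + 1))),
      (walkFromFn G f len h).support = (List.range (len + 1)).map f
  | 0, h => by simp [walkFromFn, List.range_succ]
  | (l + 1), h => by
      rw [walkFromFn, SimpleGraph.Walk.support_concat,
        walkFromFn_support G f l (fun i hi => h i (by omega)), List.range_succ,
        List.range_succ (n := l + 1), List.range_succ (n := l)]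
      simp

open SimpleGraph in
lemma walkFromFn_length {V : Type} (G : SimpleGraph V) (f : ℕ → V) :
    ∀ (len : ℕ) (h : ∀ i, i < len → G.Adj (f i) (f (i + 1))),
      (walkFromFn G f len h).length = len
  | 0, h => rfl
  | (l + 1), h => by
      rw [walkFromFn, SimpleGraph.Walk.length_concat,
        walkFromFn_length G f l (fun i hi => h i (by omega))]


section Construction

open SimpleGraph

variable (k : ℕ) (hk : 1 ≤ k)

def fV (p : ℕ × ℕ) : Fin (2 * k) × Fin (2 * k) :=
  (⟨p.1 % (2 * k), Nat.mod_lt _ (by omega)⟩, ⟨p.2 % (2 * k), Nat.mod_lt _ (by omega)⟩)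

lemma fV_val1 {p : ℕ × ℕ} (h : p.1 < 2 * k) : ((fV k hk p).1 : ℕ) = p.1 :=
  Nat.mod_eq_of_lt h

lemma fV_val2 {p : ℕ × ℕ} (h : p.2 < 2 * k) : ((fV k hk p).2 : ℕ) = p.2 :=
  Nat.mod_eq_of_lt h

lemma fV_inj {p q : ℕ × ℕ} (hp1 : p.1 < 2 * k) (hp2 : p.2 < 2 * k) (hq1 : q.1 < 2 * k)
    (hq2 : q.2 < 2 * k) (h : fV k hk p = fV k hk q) : p = q := by
  have h1 := congrArg (fun x => ((x.1 : ℕ), (x.2 : ℕ))) h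
  simp only [fV_val1 k hk hp1, fV_val2 k hk hp2, fV_val1 k hk hq1, fV_val2 k hk hq2] at h1
  exact Prod.ext (congrArg Prod.fst h1) (congrArg Prod.snd h1)

lemma GG_adj_of {p q : ℕ × ℕ} (hp1 : p.1 < 2 * k) (hp2 : p.2 < 2 * k) (hq1 : q.1 < 2 * k)
    (hq2 : q.2 < 2 * k) (h : GridRel p q ∨ GridRel q p) :
    (gridGraph (2 * k) (2 * k)).Adj (fV k hk p) (fV k hk q) := by
  rw [gridGraph, SimpleGraph.fromRel_adj]
  constructor
  · intro he
    have := fV_inj k hk hp1 hp2 hq1 hq2 he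
    subst this
    simp only [GridRel] at h
    omega
  · rw [show ((fV k hk p).1.val, (fV k hk p).2.val) = p from
        Prod.ext (fV_val1 k hk hp1) (fV_val2 k hk hp2),
      show ((fV k hk q).1.val, (fV k hk q).2.val) = q from
        Prod.ext (fV_val1 k hk hq1) (fV_val2 k hk hq2)]
    exact h

def snakeAdj : ∀ i, i < 2 * k - 1 + (2 * k - 1) * (k - 1) + k →
    (gridGraph (2 * k) (2 * k)).Adj (fV k hk (gfun k i)) (fV k hk (gfun k (i + 1))) :=
  fun i hi =>
    GG_adj_of k hk (gfun_bounds k i hk (by omega)).1 (gfun_bounds k i hk (by omega)).2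
      (gfun_bounds k (i + 1) hk (by omega)).1 (gfun_bounds k (i + 1) hk (by omega)).2
      (gfun_adj k i hk (by omega))

def P1raw : (gridGraph (2 * k) (2 * k)).Walk (fV k hk (gfun k 0))
    (fV k hk (gfun k (2 * k - 1 + (2 * k - 1) * (k - 1) + k))) :=
  walkFromFn _ (fun m => fV k hk (gfun k m)) (2 * k - 1 + (2 * k - 1) * (k - 1) + k)
    (snakeAdj k hk)

lemma P1raw_support : (P1raw k hk).support =
    (List.range (2 * k - 1 + (2 * k - 1) * (k - 1) + k + 1)).map (fun m => fV k hk (gfun k m)) :=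
  walkFromFn_support _ _ _ _

lemma P1raw_isPath : (P1raw k hk).IsPath := by
  rw [Walk.isPath_def, P1raw_support]
  apply List.Nodup.map_on _ List.nodup_range
  intro m hm m' hm' hfe
  rw [List.mem_range] at hm hm'
  have h1 : gfun k m = gfun k m' :=
    fV_inj k hk (gfun_bounds k m hk (by omega)).1 (gfun_bounds k m hk (by omega)).2
      (gfun_bounds k m' hk (by omega)).1 (gfun_bounds k m' hk (by omega)).2 hfe
  have h2 := congrArg (ginv k) h1
  rwa [ginv_gfun k m hk (by omega), ginv_gfun k m' hk (by omega)] at h2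

end Construction

section Construction2

open SimpleGraph

variable (k : ℕ) (hk : 1 ≤ k)

def cc1 : Fin (2 * k) × Fin (2 * k) := fV k hk (k - 1, k - 1)
def cc2 : Fin (2 * k) × Fin (2 * k) := fV k hk (k, k)

lemma cc1_val : ((cc1 k hk).1.val, (cc1 k hk).2.val) = (k - 1, k - 1) :=
  Prod.ext (fV_val1 k hk (by omega)) (fV_val2 k hk (by omega))

lemma cc2_val : ((cc2 k hk).1.val, (cc2 k hk).2.val) = (k, k) :=
  Prod.ext (fV_val1 k hk (by omega)) (fV_val2 k hk (by omega))

lemma cc1_val1 : ((cc1 k hk).1 : ℕ) = k - 1 := fV_val1 k hk (by omega)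
lemma cc1_val2 : ((cc1 k hk).2 : ℕ) = k - 1 := fV_val2 k hk (by omega)
lemma cc2_val1 : ((cc2 k hk).1 : ℕ) = k := fV_val1 k hk (by omega)
lemma cc2_val2 : ((cc2 k hk).2 : ℕ) = k := fV_val2 k hk (by omega)

lemma cc_ne : cc1 k hk ≠ cc2 k hk := by
  intro h
  have h1 := congrArg (fun x => (x.1.val, x.2.val)) h
  simp only [cc1_val, cc2_val] at h1
  have := congrArg Prod.fst h1
  simp at this
  omega

lemma not_GG_cc : ¬ (gridGraph (2 * k) (2 * k)).Adj (cc1 k hk) (cc2 k hk) := by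
  rw [gridGraph, SimpleGraph.fromRel_adj]
  rintro ⟨hne, h | h⟩ <;>
  · rw [show ((cc1 k hk).1.val, (cc1 k hk).2.val) = ((k:ℕ) - 1, (k:ℕ) - 1) from cc1_val k hk,
      show ((cc2 k hk).1.val, (cc2 k hk).2.val) = ((k:ℕ), (k:ℕ)) from cc2_val k hk] at h
    simp only [GridRel] at h
    omega

lemma spb_adj_cc : (spbGrid k).Adj (cc2 k hk) (cc1 k hk) := by
  rw [spbGrid, SimpleGraph.fromRel_adj]
  refine ⟨fun h => cc_ne k hk h.symm, Or.inr (Or.inr ?_)⟩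
  refine ⟨?_, ?_, ?_, ?_⟩
  · exact congrArg Prod.fst (cc1_val k hk)
  · exact congrArg Prod.snd (cc1_val k hk)
  · exact congrArg Prod.fst (cc2_val k hk)
  · exact congrArg Prod.snd (cc2_val k hk)

lemma GG_le_spb : gridGraph (2 * k) (2 * k) ≤ spbGrid k := by
  intro a b hab
  rw [gridGraph, SimpleGraph.fromRel_adj] at hab
  rw [spbGrid, SimpleGraph.fromRel_adj]
  exact ⟨hab.1, hab.2.elim (fun h => Or.inl (Or.inl h)) (fun h => Or.inr (Or.inl h))⟩

/-- 180 degree rotation as a graph homomorphism of the grid. -/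
def rot : Fin (2 * k) × Fin (2 * k) → Fin (2 * k) × Fin (2 * k) :=
  fun p => (p.1.rev, p.2.rev)

lemma rot_rot (p : Fin (2 * k) × Fin (2 * k)) : rot k (rot k p) = p := by
  simp [rot, Fin.rev_rev]

lemma rot_inj : Function.Injective (rot k) := by
  intro a b h
  have := congrArg (rot k) h
  rwa [rot_rot, rot_rot] at this

lemma val_rot1 (p : Fin (2 * k) × Fin (2 * k)) : ((rot k p).1 : ℕ) = 2 * k - 1 - p.1.val := by
  simp [rot, Fin.rev]
  omega

lemma val_rot2 (p : Fin (2 * k) × Fin (2 * k)) : ((rot k p).2 : ℕ) = 2 * k - 1 - p.2.val := by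
  simp [rot, Fin.rev]
  omega

def rotHom : gridGraph (2 * k) (2 * k) →g gridGraph (2 * k) (2 * k) where
  toFun := rot k
  map_rel' := by
    intro a b hab
    rw [gridGraph, SimpleGraph.fromRel_adj] at hab ⊢
    obtain ⟨hne, hrel⟩ := hab
    refine ⟨fun h => hne (rot_inj k h), ?_⟩
    rw [val_rot1, val_rot2, val_rot1, val_rot2]
    have b1 := a.1.isLt
    have b2 := a.2.isLt
    have b3 := b.1.isLt
    have b4 := b.2.isLt
    simp only [GridRel] at hrel ⊢
    omega

end Construction2

section Construction3

open SimpleGraph Walk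

variable (k : ℕ) (hk : 1 ≤ k)

lemma eq_of_val {a b : Fin (2 * k) × Fin (2 * k)} (h1 : a.1.val = b.1.val)
    (h2 : a.2.val = b.2.val) : a = b :=
  Prod.ext (Fin.ext h1) (Fin.ext h2)

def P1 : (gridGraph (2 * k) (2 * k)).Walk (cc1 k hk) (cc2 k hk) :=
  (P1raw k hk).copy (congrArg (fV k hk) (gfun_zero k hk)) (congrArg (fV k hk) (gfun_last k hk))

lemma P1_support : (P1 k hk).support =
    (List.range (2 * k - 1 + (2 * k - 1) * (k - 1) + k + 1)).map
      (fun m => fV k hk (gfun k m)) := by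
  exact (Walk.support_copy (P1raw k hk) _ _).trans (P1raw_support k hk)

lemma P1_isPath : (P1 k hk).IsPath := by
  exact (Walk.isPath_copy (P1raw k hk) _ _).mpr (P1raw_isPath k hk)

lemma P1_length : (P1 k hk).length = 2 * k - 1 + (2 * k - 1) * (k - 1) + k := by
  exact (Walk.length_copy (P1raw k hk) _ _).trans (by rw [P1raw, walkFromFn_length])

lemma mem_P1 (v : Fin (2 * k) × Fin (2 * k)) (hv : v.1.val < k) : v ∈ (P1 k hk).support := by
  obtain ⟨m, hm, hgm⟩ := gfun_surj k v.1.val v.2.val hk hv v.2.isLt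
  rw [P1_support]
  refine List.mem_map.mpr ⟨m, List.mem_range.mpr (by omega), ?_⟩
  rw [hgm]
  exact eq_of_val k (fV_val1 k hk v.1.isLt) (fV_val2 k hk v.2.isLt)

def rot_cc1 : rot k (cc1 k hk) = cc2 k hk :=
  eq_of_val k (by rw [val_rot1, cc1_val1, cc2_val1]; omega)
    (by rw [val_rot2, cc1_val2, cc2_val2]; omega)

def rot_cc2 : rot k (cc2 k hk) = cc1 k hk :=
  eq_of_val k (by rw [val_rot1, cc2_val1, cc1_val1]; omega)
    (by rw [val_rot2, cc2_val2, cc1_val2]; omega)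

def P2 : (gridGraph (2 * k) (2 * k)).Walk (cc2 k hk) (cc1 k hk) :=
  ((P1 k hk).map (rotHom k)).copy
    (show (rotHom k) (cc1 k hk) = cc2 k hk from rot_cc1 k hk)
    (show (rotHom k) (cc2 k hk) = cc1 k hk from rot_cc2 k hk)

lemma P2_support : (P2 k hk).support = (P1 k hk).support.map (rot k) := by
  rw [P2, Walk.support_copy, Walk.support_map]
  rfl

lemma P2_isPath : (P2 k hk).IsPath := by
  rw [P2, Walk.isPath_copy]
  exact Walk.map_isPath_of_injective (rot_inj k) (P1_isPath k hk)

lemma P2_length : (P2 k hk).length = 2 * k - 1 + (2 * k - 1) * (k - 1) + k := by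
  rw [P2, Walk.length_copy, Walk.length_map, P1_length]

def P1s : (spbGrid k).Walk (cc1 k hk) (cc2 k hk) :=
  (P1 k hk).transfer (spbGrid k)
    (fun e he => edgeSet_mono (GG_le_spb k) ((P1 k hk).edges_subset_edgeSet he))

def P2s : (spbGrid k).Walk (cc2 k hk) (cc1 k hk) :=
  (P2 k hk).transfer (spbGrid k)
    (fun e he => edgeSet_mono (GG_le_spb k) ((P2 k hk).edges_subset_edgeSet he))

def O1 : (spbGrid k).Walk (cc2 k hk) (cc2 k hk) :=
  Walk.cons (spb_adj_cc k hk) (P1s k hk)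

def O2 : (spbGrid k).Walk (cc1 k hk) (cc1 k hk) :=
  Walk.cons ((spb_adj_cc k hk).symm) (P2s k hk)

lemma O1_isCycle : (O1 k hk).IsCycle := by
  rw [O1, Walk.cons_isCycle_iff]
  refine ⟨(P1_isPath k hk).transfer _, fun h => ?_⟩
  rw [P1s, Walk.edges_transfer] at h
  have := (P1 k hk).edges_subset_edgeSet h
  rw [SimpleGraph.mem_edgeSet] at this
  exact not_GG_cc k hk this.symm

lemma O2_isCycle : (O2 k hk).IsCycle := by
  rw [O2, Walk.cons_isCycle_iff]
  refine ⟨(P2_isPath k hk).transfer _, fun h => ?_⟩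
  rw [P2s, Walk.edges_transfer] at h
  have := (P2 k hk).edges_subset_edgeSet h
  rw [SimpleGraph.mem_edgeSet] at this
  exact not_GG_cc k hk this

lemma O1_length_odd : Odd (O1 k hk).length := by
  have h1 : (O1 k hk).length = (P1 k hk).length + 1 := by
    rw [O1, Walk.length_cons, P1s, Walk.length_transfer]
  rw [h1, P1_length, Nat.odd_iff]
  have := len_odd k hk
  omega

lemma O2_length_odd : Odd (O2 k hk).length := by
  have h1 : (O2 k hk).length = (P2 k hk).length + 1 := by
    rw [O2, Walk.length_cons, P2s, Walk.length_transfer]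
  rw [h1, P2_length, Nat.odd_iff]
  have := len_odd k hk
  omega

end Construction3

open SimpleGraph Walk in
lemma spb_key'' (k : ℕ) (hk : 1 ≤ k) :
    ∃ (c₁ c₂ : Fin (2 * k) × Fin (2 * k)), c₁ ≠ c₂ ∧ (spbGrid k).Adj c₁ c₂ ∧
      ∃ (x y : Fin (2 * k) × Fin (2 * k)) (O₁ : (spbGrid k).Walk x x)
        (O₂ : (spbGrid k).Walk y y),
        O₁.IsCycle ∧ O₂.IsCycle ∧ Odd O₁.length ∧ Odd O₂.length ∧
        c₁ ∈ O₁.support ∧ c₂ ∈ O₁.support ∧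
        ∀ v, v ∈ O₁.support ∨ v ∈ O₂.support := by
  refine ⟨cc1 k hk, cc2 k hk, cc_ne k hk, (spb_adj_cc k hk).symm,
    cc2 k hk, cc1 k hk, O1 k hk, O2 k hk, O1_isCycle k hk, O2_isCycle k hk,
    O1_length_odd k hk, O2_length_odd k hk, ?_, ?_, ?_⟩
  · rw [O1, Walk.support_cons]
    exact List.mem_cons_of_mem _ (by rw [P1s, Walk.support_transfer]; exact Walk.start_mem_support _)
  · rw [O1, Walk.support_cons]
    exact List.mem_cons_self
  · intro v
    rcases Nat.lt_or_ge v.1.val k with hv | hv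
    · left
      rw [O1, Walk.support_cons]
      exact List.mem_cons_of_mem _ (by rw [P1s, Walk.support_transfer]; exact mem_P1 k hk v hv)
    · right
      rw [O2, Walk.support_cons]
      apply List.mem_cons_of_mem
      rw [P2s, Walk.support_transfer, P2_support]
      have hrot : (rot k v).1.val < k := by
        rw [val_rot1]
        have := v.1.isLt
        omega
      refine List.mem_map.mpr ⟨rot k v, mem_P1 k hk _ hrot, rot_rot k v⟩



/-- Key combinatorial fact: two odd cycles in `S_k` whose supports cover everything,
both passing through the two endpoints of the parity-breaking edge. -/
lemma spb_key (k : ℕ) (hk : 1 ≤ k) :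
    ∃ (c₁ c₂ : Fin (2 * k) × Fin (2 * k)), c₁ ≠ c₂ ∧ (spbGrid k).Adj c₁ c₂ ∧
      ∃ (x y : Fin (2 * k) × Fin (2 * k)) (O₁ : (spbGrid k).Walk x x)
        (O₂ : (spbGrid k).Walk y y),
        O₁.IsCycle ∧ O₂.IsCycle ∧ Odd O₁.length ∧ Odd O₂.length ∧
        c₁ ∈ O₁.support ∧ c₂ ∈ O₁.support ∧
        ∀ v, v ∈ O₁.support ∨ v ∈ O₂.support :=
  spb_key'' k hk

end Aux

/-- For every integer `k ≥ 1`, the `B`-blind-treewidth of the singly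
parity-breaking grid `S_k` equals `tw(S_k) + 1`. -/
theorem blindTwB_spbGrid (k : ℕ) (hk : 1 ≤ k) :
    blindTwB (spbGrid k) = treewidth (spbGrid k) + 1 := by
  classical
  obtain ⟨c₁, c₂, hne, hadj, x, y, O₁, O₂, hc₁, hc₂, ho₁, ho₂, m₁₁, m₁₂, hcov⟩ := spb_key k hk
  haveI : Nonempty (Fin (2 * k) × Fin (2 * k)) := ⟨(⟨0, by omega⟩, ⟨0, by omega⟩)⟩
  have hVfin : (Set.univ : Set (Fin (2 * k) × Fin (2 * k))).Finite := Set.finite_univ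
  apply blindTwB_eq_of_bad (spbGrid k) c₁ c₂ hne hadj
  · intro X h1 h2 hGB
    exact hne (hGB O₁ hc₁ ho₁ ⟨h1, m₁₁⟩ ⟨h2, m₁₂⟩)
  · intro X h3 hGB
    have hs1 : (X ∩ {x | x ∈ O₁.support}).Subsingleton := hGB O₁ hc₁ ho₁
    have hs2 : (X ∩ {x | x ∈ O₂.support}).Subsingleton := hGB O₂ hc₂ ho₂
    have hXsub : X ⊆ (X ∩ {x | x ∈ O₁.support}) ∪ (X ∩ {x | x ∈ O₂.support}) := by
      intro v hv
      rcases hcov v with h | h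
      · exact Or.inl ⟨hv, h⟩
      · exact Or.inr ⟨hv, h⟩
    have hle : X.ncard ≤ 2 := by
      calc X.ncard ≤ ((X ∩ {x | x ∈ O₁.support}) ∪ (X ∩ {x | x ∈ O₂.support})).ncard :=
            Set.ncard_le_ncard hXsub ((hVfin.subset (Set.subset_univ _)).union
              (hVfin.subset (Set.subset_univ _)))
        _ ≤ (X ∩ {x | x ∈ O₁.support}).ncard + (X ∩ {x | x ∈ O₂.support}).ncard :=
            Set.ncard_union_le _ _
        _ ≤ 1 + 1 := Nat.add_le_add
              ((Set.ncard_le_one (hVfin.subset (Set.subset_univ _))).mpr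
                (fun a ha b hb => hs1 ha hb))
              ((Set.ncard_le_one (hVfin.subset (Set.subset_univ _))).mpr
                (fun a ha b hb => hs2 ha hb))
    omega
end
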